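/- arXiv:1409.4380 — 2 statements merged into one kernel-verified Lean document; each statement's English description precedes it below -/
import Mathlib

section
/- Every congruence on G(E) is a Rees congruence if and only if for every edge e ∈ E¹ there exists a path p of positive length with s(p) = s(e) and r(p) = r(e) such that p ≠ et for all paths t. -/
universe u

/-- A directed graph: vertices, edges, source and range maps. -/
structure DGraph : Type (u + 1) where
  V : Type u
  Ed : Type u
  src : Ed → V
  rng : Ed → V

/-- The end vertex of a list of edges started at `v` (ignoring composability). -/
def DGraph.ranAux (G : DGraph) : G.V → List G.Ed → G.V
  | v, [] => v
  | _, e :: es => DGraph.ranAux G (G.rng e) es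

/-- The edges `l` form a composable path starting at `v`. -/
def DGraph.Chain (G : DGraph) : G.V → List G.Ed → Prop
  | _, [] => True
  | v, e :: es => G.src e = v ∧ DGraph.Chain G (G.rng e) es

theorem DGraph.ranAux_append (G : DGraph) (v : G.V) (l1 l2 : List G.Ed) :
    G.ranAux v (l1 ++ l2) = G.ranAux (G.ranAux v l1) l2 := by
  induction l1 generalizing v with
  | nil => rfl
  | cons e es ih => exact ih (G.rng e)

theorem DGraph.chain_append (G : DGraph) {v : G.V} {l1 l2 : List G.Ed}
    (h1 : G.Chain v l1) (h2 : G.Chain (G.ranAux v l1) l2) : G.Chain v (l1 ++ l2) := by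
  induction l1 generalizing v with
  | nil => exact h2
  | cons e es ih => exact ⟨h1.1, ih h1.2 h2⟩

theorem DGraph.chain_append_right (G : DGraph) {v : G.V} {l1 l2 : List G.Ed}
    (h : G.Chain v (l1 ++ l2)) : G.Chain (G.ranAux v l1) l2 := by
  induction l1 generalizing v with
  | nil => exact h
  | cons e es ih => exact ih h.2

/-- A (finite, directed) path in the graph `G`: a start vertex together
with a composable list of edges. Vertices are the paths of length `0`. -/
structure GPath (G : DGraph.{u}) : Type u where
  start : G.V
  edges : List G.Ed
  chain : G.Chain start edges

namespace GPath

variable {G : DGraph}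

/-- The range (end vertex) of a path. -/
def ran (p : GPath G) : G.V := G.ranAux p.start p.edges

/-- The path of length zero at a vertex. -/
def ofVertex (G : DGraph) (v : G.V) : GPath G := ⟨v, [], trivial⟩

/-- The path of length one given by an edge. -/
def ofEdge (G : DGraph) (e : G.Ed) : GPath G := ⟨G.src e, [e], ⟨rfl, trivial⟩⟩

@[simp] theorem ofVertex_ran (G : DGraph) (v : G.V) : (ofVertex G v).ran = v := rfl

@[simp] theorem ofEdge_ran (G : DGraph) (e : G.Ed) : (ofEdge G e).ran = G.rng e := rfl

/-- Concatenation of composable paths. -/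
def append (p q : GPath G) (h : p.ran = q.start) : GPath G :=
  ⟨p.start, p.edges ++ q.edges,
    G.chain_append p.chain (by
      show G.Chain (G.ranAux p.start p.edges) q.edges
      have : G.ranAux p.start p.edges = q.start := h
      rw [this]; exact q.chain)⟩

@[simp] theorem append_ran (p q : GPath G) (h : p.ran = q.start) :
    (p.append q h).ran = q.ran := by
  show G.ranAux p.start (p.edges ++ q.edges) = q.ran
  rw [G.ranAux_append]
  have : G.ranAux p.start p.edges = q.start := h
  rw [this]; rfl

/-- `y` is an initial segment of the path `p`. -/
def IsPrefixOf (y p : GPath G) : Prop := y.start = p.start ∧ y.edges <+: p.edges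

/-- The remainder `t` of `p` after its initial segment `y`, so that `p = y ++ t`. -/
def remainder (y p : GPath G) (h : y.IsPrefixOf p) : GPath G :=
  ⟨y.ran, p.edges.drop y.edges.length, by
    obtain ⟨l2, hl⟩ := h.2
    rw [← hl, List.drop_left]
    show G.Chain (G.ranAux y.start y.edges) l2
    rw [h.1]
    exact G.chain_append_right (v := p.start) (l1 := y.edges) (l2 := l2)
      (by rw [hl]; exact p.chain)⟩

@[simp] theorem remainder_ran (y p : GPath G) (h : y.IsPrefixOf p) :
    (y.remainder p h).ran = p.ran := by
  obtain ⟨l2, hl⟩ := h.2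
  show G.ranAux y.ran (p.edges.drop y.edges.length) = p.ran
  rw [← hl, List.drop_left]
  show G.ranAux (G.ranAux y.start y.edges) l2 = p.ran
  rw [h.1, ← G.ranAux_append, hl]
  rfl

end GPath

/-- The graph inverse semigroup of `G` (in normal form): its elements are zero together
with the elements `x * y⁻¹` for paths `x`, `y` with the same range. -/
inductive GIS (G : DGraph.{u}) : Type u where
  | zero : GIS G
  | mk (x y : GPath G) (h : x.ran = y.ran) : GIS G

instance (G : DGraph) : Zero (GIS G) := ⟨GIS.zero⟩

open scoped Classical in
/-- Multiplication in the graph inverse semigroup. -/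
noncomputable def GIS.gmul {G : DGraph} : GIS G → GIS G → GIS G
  | GIS.zero, _ => GIS.zero
  | GIS.mk _ _ _, GIS.zero => GIS.zero
  | GIS.mk x y hxy, GIS.mk p q hpq =>
    if h1 : y.IsPrefixOf p then
      GIS.mk (x.append (y.remainder p h1) hxy) q
        ((GPath.append_ran _ _ _).trans ((GPath.remainder_ran _ _ _).trans hpq))
    else if h2 : p.IsPrefixOf y then
      GIS.mk x (q.append (p.remainder y h2) hpq.symm)
        (hxy.trans ((GPath.append_ran _ _ _).trans (GPath.remainder_ran _ _ _)).symm)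
    else GIS.zero

noncomputable instance (G : DGraph) : Mul (GIS G) := ⟨GIS.gmul⟩

/-- The element of `GIS G` corresponding to a vertex `v` (i.e. `v = v * v⁻¹`). -/
def vertexEl (G : DGraph) (v : G.V) : GIS G :=
  GIS.mk (GPath.ofVertex G v) (GPath.ofVertex G v) rfl

/-- The element of `GIS G` corresponding to an edge `e` (i.e. `e = e * r(e)⁻¹`). -/
def edgeEl (G : DGraph) (e : G.Ed) : GIS G :=
  GIS.mk (GPath.ofEdge G e) (GPath.ofVertex G (G.rng e)) rfl

/-- The inverse operation on `GIS G`: `(x y⁻¹)⁻¹ = y x⁻¹`. -/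
def GIS.inv {G : DGraph} : GIS G → GIS G
  | GIS.zero => GIS.zero
  | GIS.mk x y h => GIS.mk y x h.symm

/-- `a` lies in the principal left ideal generated by `b` (`S¹a ⊆ S¹b`). -/
def GreenLeL {G : DGraph} (a b : GIS G) : Prop := a = b ∨ ∃ c, a = c * b

/-- `a` lies in the principal right ideal generated by `b` (`aS¹ ⊆ bS¹`). -/
def GreenLeR {G : DGraph} (a b : GIS G) : Prop := a = b ∨ ∃ c, a = b * c

/-- `a` lies in the principal two-sided ideal generated by `b` (`S¹aS¹ ⊆ S¹bS¹`). -/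
def GreenLeJ {G : DGraph} (a b : GIS G) : Prop :=
  a = b ∨ (∃ c, a = c * b) ∨ (∃ c, a = b * c) ∨ (∃ c d, a = c * b * d)

/-- Green's `L`-relation. -/
def GreenEqL {G : DGraph} (a b : GIS G) : Prop := GreenLeL a b ∧ GreenLeL b a

/-- Green's `R`-relation. -/
def GreenEqR {G : DGraph} (a b : GIS G) : Prop := GreenLeR a b ∧ GreenLeR b a

/-- Green's `J`-relation. -/
def GreenEqJ {G : DGraph} (a b : GIS G) : Prop := GreenLeJ a b ∧ GreenLeJ b a

/-- There is a (possibly trivial) directed path from `v` to `w` in `G`. -/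
def GConnected (G : DGraph) (v w : G.V) : Prop := ∃ t : GPath G, t.start = v ∧ t.ran = w

/-- `I` is a (two-sided) ideal of `GIS G`. -/
def GISIdeal {G : DGraph} (I : Set (GIS G)) : Prop :=
  ∀ a ∈ I, ∀ c : GIS G, a * c ∈ I ∧ c * a ∈ I

/-- `R` is the Rees congruence of some ideal `I`, i.e. `R = (I × I) ∪ Δ`. -/
def IsReesCon {G : DGraph} (R : Con (GIS G)) : Prop :=
  ∃ I : Set (GIS G), GISIdeal I ∧ ∀ a b : GIS G, R a b ↔ (a ∈ I ∧ b ∈ I) ∨ a = b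

/-- The only congruences on `GIS G` are the universal one and the diagonal. -/
def CongFree (G : DGraph) : Prop :=
  ∀ R : Con (GIS G), (∀ a b : GIS G, R a b) ∨ (∀ a b : GIS G, R a b ↔ a = b)

/-- The natural partial order on the inverse semigroup `GIS G`:
`a ≤ b` iff `a = ε * b` for some idempotent `ε`. -/
def natLe {G : DGraph} (a b : GIS G) : Prop := ∃ ε : GIS G, ε * ε = ε ∧ a = ε * b

/-- The graph obtained from `G` by deleting the vertices in `S` and all
edges incident to them. -/
def DGraph.delete (G : DGraph) (S : Set G.V) : DGraph where
  V := {v : G.V // v ∉ S}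
  Ed := {e : G.Ed // G.src e ∉ S ∧ G.rng e ∉ S}
  src e := ⟨G.src e.1, e.2.1⟩
  rng e := ⟨G.rng e.1, e.2.2⟩

/-- The graph with a single vertex and `n` loops; its graph inverse semigroup
is the polycyclic monoid `Pₙ`. -/
def polyGraph (n : ℕ) : DGraph :=
  ⟨PUnit, Fin n, fun _ => PUnit.unit, fun _ => PUnit.unit⟩


/-! ### Auxiliary infrastructure -/

namespace GPath

variable {G : DGraph}

theorem ext' {p q : GPath G} (h1 : p.start = q.start) (h2 : p.edges = q.edges) : p = q := by
  cases p; cases q; simp_all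

end GPath

theorem DGraph.chain_prefix (G : DGraph) {v : G.V} {l1 l2 : List G.Ed}
    (h : G.Chain v (l1 ++ l2)) : G.Chain v l1 := by
  induction l1 generalizing v with
  | nil => trivial
  | cons e es ih => exact ⟨h.1, ih h.2⟩

namespace GPath

variable {G : DGraph}

/-- Extend a path by a list of edges forming a chain at its range. -/
def extend (p : GPath G) (u : List G.Ed) (hc : G.Chain p.ran u) : GPath G :=
  ⟨p.start, p.edges ++ u, G.chain_append p.chain hc⟩

@[simp] theorem extend_start (p : GPath G) (u hc) : (p.extend u hc).start = p.start := rfl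
@[simp] theorem extend_edges (p : GPath G) (u hc) : (p.extend u hc).edges = p.edges ++ u := rfl

theorem ran_extend (p : GPath G) (u hc) : (p.extend u hc).ran = G.ranAux p.ran u :=
  G.ranAux_append _ _ _

theorem extend_nil (p : GPath G) (hc) : p.extend [] hc = p :=
  ext' rfl (List.append_nil _)

theorem prefix_extend (p : GPath G) (u hc) : p.IsPrefixOf (p.extend u hc) :=
  ⟨rfl, ⟨u, rfl⟩⟩

theorem extend_inj {p : GPath G} {u hc u' hc'} (h : p.extend u hc = p.extend u' hc') :
    u = u' := by
  have := congrArg GPath.edges h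
  simpa using this

end GPath

namespace GIS

variable {G : DGraph}

theorem mk_congr {x x' y y' : GPath G} (hx : x = x') (hy : y = y') (h h') :
    GIS.mk x y h = GIS.mk x' y' h' := by subst hx; subst hy; rfl

@[simp] theorem zero_mul (a : GIS G) : (0 : GIS G) * a = 0 := rfl

@[simp] theorem mul_zero (a : GIS G) : a * 0 = 0 := by
  cases a <;> rfl

theorem mk_ne_zero (x y : GPath G) (h) : GIS.mk x y h ≠ 0 := by
  intro hh; cases hh

theorem mul_mk_mk (x y p q : GPath G) (h h') :
    GIS.mk x y h * GIS.mk p q h' = GIS.gmul (GIS.mk x y h) (GIS.mk p q h') := rfl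

/-- Product when the second element's left path extends the first's right path. -/
theorem mulA (x y : GPath G) (h : x.ran = y.ran) (u : List G.Ed) (hc : G.Chain y.ran u)
    (q : GPath G) (h' : (y.extend u hc).ran = q.ran) (hc2 : G.Chain x.ran u)
    (h'' : (x.extend u hc2).ran = q.ran) :
    GIS.mk x y h * GIS.mk (y.extend u hc) q h' = GIS.mk (x.extend u hc2) q h'' := by
  rw [mul_mk_mk]
  simp only [GIS.gmul]
  rw [dif_pos (y.prefix_extend u hc)]
  refine mk_congr ?_ rfl _ _
  refine GPath.ext' rfl ?_
  show x.edges ++ _ = x.edges ++ u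
  congr 1
  show ((y.edges ++ u).drop y.edges.length) = u
  simp

/-- Product when the first element's right path properly extends the second's left path. -/
theorem mulB (x p : GPath G) (u : List G.Ed) (hu : u ≠ []) (hc : G.Chain p.ran u)
    (h : x.ran = (p.extend u hc).ran) (q : GPath G) (h' : p.ran = q.ran)
    (hc2 : G.Chain q.ran u) (h'' : x.ran = (q.extend u hc2).ran) :
    GIS.mk x (p.extend u hc) h * GIS.mk p q h' = GIS.mk x (q.extend u hc2) h'' := by
  rw [mul_mk_mk]
  simp only [GIS.gmul]
  rw [dif_neg, dif_pos (p.prefix_extend u hc)]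
  · refine mk_congr rfl ?_ _ _
    refine GPath.ext' rfl ?_
    show q.edges ++ _ = q.edges ++ u
    congr 1
    show ((p.edges ++ u).drop p.edges.length) = u
    simp
  · rintro ⟨-, hpre⟩
    have := hpre.length_le
    rw [GPath.extend_edges, List.length_append] at this
    exact hu (List.eq_nil_of_length_eq_zero (by omega))

/-- Product of incomparable elements is zero. -/
theorem mulC (x y p q : GPath G) (h h') (h1 : ¬ y.IsPrefixOf p) (h2 : ¬ p.IsPrefixOf y) :
    GIS.mk x y h * GIS.mk p q h' = 0 := by
  rw [mul_mk_mk]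
  simp only [GIS.gmul]
  rw [dif_neg h1, dif_neg h2]
  rfl

/-- Product when the right path of the first equals the left path of the second. -/
theorem mulA0 (x y : GPath G) (h : x.ran = y.ran) (q : GPath G) (h' : y.ran = q.ran)
    (h'' : x.ran = q.ran) :
    GIS.mk x y h * GIS.mk y q h' = GIS.mk x q h'' := by
  rw [mul_mk_mk]
  simp only [GIS.gmul]
  rw [dif_pos ⟨rfl, List.prefix_refl _⟩]
  refine mk_congr ?_ rfl _ _
  refine GPath.ext' rfl ?_
  show x.edges ++ (y.edges.drop y.edges.length) = x.edges
  simp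

end GIS

namespace Stmt14

variable {G : DGraph}

/-- The path condition in Statement 14. -/
def CondC (G : DGraph) : Prop :=
  ∀ e : G.Ed, ∃ p : GPath G, p.edges ≠ [] ∧ p.start = G.src e ∧ p.ran = G.rng e ∧
    ∀ (t : GPath G) (ht : (GPath.ofEdge G e).ran = t.start),
      p ≠ (GPath.ofEdge G e).append t ht

theorem exitEdge (hC : CondC G) (e : G.Ed) :
    ∃ (f : G.Ed) (l : List G.Ed), f ≠ e ∧ G.Chain (G.src e) (f :: l) ∧
      G.ranAux (G.src e) (f :: l) = G.rng e := by
  obtain ⟨p, hne, hs, hr, hnp⟩ := hC e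
  obtain ⟨f, l, hfl⟩ : ∃ f l, p.edges = f :: l := by
    cases hp : p.edges with
    | nil => exact absurd hp hne
    | cons f l => exact ⟨f, l, rfl⟩
  have hch : G.Chain (G.src e) (f :: l) := by rw [← hs, ← hfl]; exact p.chain
  refine ⟨f, l, ?_, hch, ?_⟩
  · intro hfe
    have hcl : G.Chain (G.rng e) l := by
      have := hch.2; rw [hfe] at this; exact this
    exact hnp ⟨G.rng e, l, hcl⟩ rfl (GPath.ext' hs (by rw [hfl, hfe]; rfl))
  · rw [← hs, ← hfl]; exact hr

theorem GPath.not_prefix_extend_ne {w : GPath G} {m1 m2 : List G.Ed} {e f : G.Ed}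
    (hef : e ≠ f) (hc1 hc2) :
    ¬ (w.extend (e :: m1) hc1).IsPrefixOf (w.extend (f :: m2) hc2) := by
  rintro ⟨-, hp⟩
  rw [GPath.extend_edges, GPath.extend_edges, List.prefix_append_right_inj] at hp
  exact hef (List.cons_prefix_cons.mp hp).1

theorem GPath.eq_extend_of_prefix {w s : GPath G} (h : w.IsPrefixOf s) :
    ∃ u hc, s = w.extend u hc := by
  obtain ⟨hstart, u, hu⟩ := h
  have hc : G.Chain w.ran u := by
    refine G.chain_append_right (v := w.start) (l1 := w.edges) ?_
    rw [hu, hstart]; exact s.chain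
  exact ⟨u, hc, GPath.ext' hstart.symm hu.symm⟩

theorem GIS.mk_inj {x y x' y' : GPath G} {h h'} (he : GIS.mk x y h = GIS.mk x' y' h') :
    x = x' ∧ y = y' := by cases he; exact ⟨rfl, rfl⟩

/-- Key lemma: a congruence relating `t t⁻¹` to `t (tm)⁻¹` for a nontrivial cycle `m`
sends `t t⁻¹` to zero, provided the exit condition holds. -/
theorem keyCycle (hC : CondC G) (R : Con (GIS G)) (t : GPath G) (m : List G.Ed)
    (hm : m ≠ []) (hch : G.Chain t.ran m) (hcy : G.ranAux t.ran m = t.ran)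
    (h : R (GIS.mk t (t.extend m hch) (by rw [t.ran_extend]; exact hcy.symm))
      (GIS.mk t t rfl)) :
    R (GIS.mk t t rfl) 0 := by
  obtain ⟨e, m2, rfl⟩ : ∃ e m2, m = e :: m2 := by
    cases m with
    | nil => exact absurd rfl hm
    | cons e m2 => exact ⟨e, m2, rfl⟩
  have hse : G.src e = t.ran := hch.1
  have hchm2 : G.Chain (G.rng e) m2 := hch.2
  obtain ⟨f, l, hfe, hchf, hrf⟩ := exitEdge hC e
  rw [hse] at hchf hrf
  -- the alternative cycle N
  have hchN : G.Chain t.ran ((f :: l) ++ m2) := by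
    refine G.chain_append hchf ?_
    rw [hrf]; exact hchm2
  have hranN : G.ranAux t.ran ((f :: l) ++ m2) = t.ran := by
    rw [G.ranAux_append, hrf]
    exact hcy
  set N : List G.Ed := (f :: l) ++ m2 with hN
  have hDr : (t.extend N hchN).ran = t.ran := by rw [t.ran_extend]; exact hranN
  have hmr : (t.extend (e :: m2) hch).ran = t.ran := by rw [t.ran_extend]; exact hcy
  -- D = (tN) t⁻¹
  have step1 : GIS.mk t t rfl * GIS.mk (t.extend N hchN) t hDr
      = GIS.mk (t.extend N hchN) t hDr := GIS.mulA t t rfl N hchN t hDr hchN hDr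
  have step2 : GIS.mk t (t.extend (e :: m2) hch) hmr.symm * GIS.mk (t.extend N hchN) t hDr
      = 0 := by
    refine GIS.mulC _ _ _ _ _ _ ?_ ?_
    · exact GPath.not_prefix_extend_ne (Ne.symm hfe) hch hchN
    · exact GPath.not_prefix_extend_ne hfe hchN hch
  have hD0 : R (GIS.mk (t.extend N hchN) t hDr) 0 := by
    have := R.mul h (R.refl (GIS.mk (t.extend N hchN) t hDr))
    rw [step1, step2] at this
    exact R.symm this
  have step3 : GIS.mk t (t.extend N hchN) hDr.symm * GIS.mk (t.extend N hchN) t hDr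
      = GIS.mk t t rfl := GIS.mulA0 _ _ _ _ _ rfl
  have := R.mul (R.refl (GIS.mk t (t.extend N hchN) hDr.symm)) hD0
  rw [step3, GIS.mul_zero] at this
  exact this

theorem keyCycleR (hC : CondC G) (R : Con (GIS G)) (t : GPath G) (m : List G.Ed)
    (hm : m ≠ []) (hch : G.Chain t.ran m) (hcy : G.ranAux t.ran m = t.ran)
    (h : R (GIS.mk (t.extend m hch) t (by rw [t.ran_extend]; exact hcy))
      (GIS.mk t t rfl)) :
    R (GIS.mk t t rfl) 0 := by
  have hmr : (t.extend m hch).ran = t.ran := by rw [t.ran_extend]; exact hcy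
  have s1 : GIS.mk t (t.extend m hch) hmr.symm * GIS.mk (t.extend m hch) t hmr
      = GIS.mk t t rfl := GIS.mulA0 _ _ _ _ _ rfl
  have s2 : GIS.mk t (t.extend m hch) hmr.symm * GIS.mk t t rfl
      = GIS.mk t (t.extend m hch) hmr.symm := GIS.mulB t t m hm hch hmr.symm t rfl hch hmr.symm
  have := R.mul (R.refl (GIS.mk t (t.extend m hch) hmr.symm)) h
  rw [s1, s2] at this
  exact keyCycle hC R t m hm hch hcy (R.symm this)

/-- Key lemma: a congruence relating comparable distinct idempotents sends them to zero. -/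
theorem keyBreak (hC : CondC G) (R : Con (GIS G)) (w : GPath G) (u : List G.Ed)
    (hu : u ≠ []) (hc : G.Chain w.ran u)
    (h : R (GIS.mk w w rfl) (GIS.mk (w.extend u hc) (w.extend u hc) rfl)) :
    R (GIS.mk w w rfl) 0 := by
  obtain ⟨e, u2, rfl⟩ : ∃ e u2, u = e :: u2 := by
    cases u with
    | nil => exact absurd rfl hu
    | cons e u2 => exact ⟨e, u2, rfl⟩
  have hse : G.src e = w.ran := hc.1
  have hchu2 : G.Chain (G.rng e) u2 := hc.2
  have hc1 : G.Chain w.ran [e] := ⟨hse, trivial⟩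
  have hr1 : (w.extend [e] hc1).ran = G.rng e := by rw [w.ran_extend]; rfl
  -- step 1 : R (w1 w1⁻¹) (wu wu⁻¹)
  have hc2 : G.Chain (w.extend [e] hc1).ran u2 := by rw [hr1]; exact hchu2
  have hpath : w.extend (e :: u2) hc = (w.extend [e] hc1).extend u2 hc2 := by
    refine GPath.ext' rfl ?_
    simp
  have s1 : GIS.mk (w.extend [e] hc1) (w.extend [e] hc1) rfl * GIS.mk w w rfl
      = GIS.mk (w.extend [e] hc1) (w.extend [e] hc1) rfl :=
    GIS.mulB _ w [e] (by simp) hc1 rfl w rfl hc1 rfl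
  have s2 : GIS.mk (w.extend [e] hc1) (w.extend [e] hc1) rfl
        * GIS.mk (w.extend (e :: u2) hc) (w.extend (e :: u2) hc) rfl
      = GIS.mk (w.extend (e :: u2) hc) (w.extend (e :: u2) hc) rfl := by
    rw [hpath]
    exact GIS.mulA _ _ rfl u2 hc2 _ rfl hc2 rfl
  have hww1 : R (GIS.mk w w rfl) (GIS.mk (w.extend [e] hc1) (w.extend [e] hc1) rfl) := by
    have h2 := R.mul (R.refl (GIS.mk (w.extend [e] hc1) (w.extend [e] hc1) rfl)) h
    rw [s1, s2] at h2
    exact R.trans h (R.symm h2)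
  -- step 2 : the exit path kills w1 w1⁻¹
  obtain ⟨f, l, hfe, hchf, hrf⟩ := exitEdge hC e
  have hcP : G.Chain w.ran (f :: l) := by rw [hse] at hchf; exact hchf
  have hrP : (w.extend (f :: l) hcP).ran = G.rng e := by
    rw [w.ran_extend, ← hse]
    exact hrf
  have hA : (w.extend [e] hc1).ran = (w.extend (f :: l) hcP).ran := by rw [hr1, hrP]
  have s3 : GIS.mk (w.extend [e] hc1) (w.extend (f :: l) hcP) hA * GIS.mk w w rfl
      = GIS.mk (w.extend [e] hc1) (w.extend (f :: l) hcP) hA :=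
    GIS.mulB _ w (f :: l) (by simp) hcP hA w rfl hcP hA
  have s4 : GIS.mk (w.extend [e] hc1) (w.extend (f :: l) hcP) hA
        * GIS.mk (w.extend [e] hc1) (w.extend [e] hc1) rfl = 0 := by
    refine GIS.mulC _ _ _ _ _ _ ?_ ?_
    · exact GPath.not_prefix_extend_ne hfe hcP hc1
    · exact GPath.not_prefix_extend_ne (Ne.symm hfe) hc1 hcP
  have hA0 : R (GIS.mk (w.extend [e] hc1) (w.extend (f :: l) hcP) hA) 0 := by
    have := R.mul (R.refl (GIS.mk (w.extend [e] hc1) (w.extend (f :: l) hcP) hA)) hww1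
    rw [s3, s4] at this
    exact this
  have s5 : GIS.mk (w.extend [e] hc1) (w.extend (f :: l) hcP) hA
        * GIS.mk (w.extend (f :: l) hcP) (w.extend [e] hc1) hA.symm
      = GIS.mk (w.extend [e] hc1) (w.extend [e] hc1) rfl := GIS.mulA0 _ _ _ _ _ rfl
  have h10 : R (GIS.mk (w.extend [e] hc1) (w.extend [e] hc1) rfl) 0 := by
    have := R.mul hA0 (R.refl (GIS.mk (w.extend (f :: l) hcP) (w.extend [e] hc1) hA.symm))
    rw [s5, GIS.zero_mul] at this
    exact this
  exact R.trans hww1 h10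

end Stmt14

namespace Stmt14

variable {G : DGraph}

theorem main2 (hC : CondC G) (R : Con (GIS G)) (w s t : GPath G)
    (hws : w.IsPrefixOf s) (hst : s.ran = t.ran)
    (hne : GIS.mk s t hst ≠ GIS.mk w w rfl)
    (h : R (GIS.mk w w rfl) (GIS.mk s t hst)) :
    R (GIS.mk w w rfl) 0 := by
  obtain ⟨u, hcu, rfl⟩ := GPath.eq_extend_of_prefix hws
  by_cases hp1 : t.IsPrefixOf w
  · -- t is a prefix of w
    obtain ⟨m, hcm, hw⟩ := GPath.eq_extend_of_prefix hp1
    have hcm2 : G.Chain (w.extend u hcu).ran m := by rw [hst]; exact hcm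
    have h' : (t.extend m hcm).ran = w.ran := by rw [hw]
    have h'' : ((w.extend u hcu).extend m hcm2).ran = w.ran := by
      rw [GPath.ran_extend, hst, ← GPath.ran_extend t m hcm, hw]
    have step := R.mul h (R.refl (GIS.mk w w rfl))
    rw [GIS.mulA0 w w rfl w rfl rfl] at step
    have prod2 : GIS.mk (w.extend u hcu) t hst * GIS.mk w w rfl
        = GIS.mk ((w.extend u hcu).extend m hcm2) w h'' := by
      have e2 : GIS.mk w w rfl = GIS.mk (t.extend m hcm) w h' :=
        GIS.mk_congr hw rfl _ _
      rw [e2]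
      exact GIS.mulA _ t hst m hcm _ h' hcm2 h''
    rw [prod2] at step
    have base : G.Chain w.start (w.edges ++ (u ++ m)) := by
      rw [← List.append_assoc]
      exact ((w.extend u hcu).extend m hcm2).chain
    have hcum : G.Chain w.ran (u ++ m) := G.chain_append_right base
    have hpath2 : (w.extend u hcu).extend m hcm2 = w.extend (u ++ m) hcum :=
      GPath.ext' rfl (by simp)
    by_cases hc0 : u ++ m = []
    · rcases List.append_eq_nil_iff.mp hc0 with ⟨hu0, hm0⟩
      subst hu0; subst hm0
      refine absurd (GIS.mk_congr (GPath.extend_nil _ _) ?_ hst rfl) hne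
      rw [hw, GPath.extend_nil]
    · have hcy : G.ranAux w.ran (u ++ m) = w.ran := by
        have h3 := h''
        rw [hpath2, GPath.ran_extend w (u ++ m) hcum] at h3
        exact h3
      have h5 : (w.extend (u ++ m) hcum).ran = w.ran := by
        rw [GPath.ran_extend w (u ++ m) hcum]; exact hcy
      have e5 : GIS.mk ((w.extend u hcu).extend m hcm2) w h''
          = GIS.mk (w.extend (u ++ m) hcum) w h5 := GIS.mk_congr hpath2 rfl _ _
      rw [e5] at step
      exact keyCycleR hC R w (u ++ m) hc0 hcum hcy (R.symm step)
  · by_cases hp2 : w.IsPrefixOf t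
    · -- w is a (proper) prefix of t
      obtain ⟨m, hcm, rfl⟩ := GPath.eq_extend_of_prefix hp2
      have hm : m ≠ [] := by
        rintro rfl
        exact hp1 ⟨rfl, by simp⟩
      by_cases hu0 : u = []
      · subst hu0
        have hpr : w.ran = (w.extend m hcm).ran := by
          have h2 := hst; rw [GPath.extend_nil] at h2; exact h2
        have e1 : GIS.mk (w.extend [] hcu) (w.extend m hcm) hst
            = GIS.mk w (w.extend m hcm) hpr :=
          GIS.mk_congr (GPath.extend_nil _ _) rfl _ _
        have h3 := h
        rw [e1] at h3
        have hcy : G.ranAux w.ran m = w.ran := by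
          have h4 := hpr
          rw [GPath.ran_extend w m hcm] at h4
          exact h4.symm
        exact keyCycle hC R w m hm hcm hcy (R.symm h3)
      · by_cases hum : u <+: m
        · obtain ⟨m2, hm2⟩ := hum
          by_cases hm20 : m2 = []
          · subst hm20
            have hmu : m = u := by rw [← hm2, List.append_nil]
            have hps : w.extend m hcm = w.extend u hcu :=
              GPath.ext' rfl (show w.edges ++ m = w.edges ++ u by rw [hmu])
            have e1 : GIS.mk (w.extend u hcu) (w.extend m hcm) hst
                = GIS.mk (w.extend u hcu) (w.extend u hcu) rfl :=
              GIS.mk_congr rfl hps _ _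
            have h3 := h
            rw [e1] at h3
            exact keyBreak hC R w u hu0 hcu h3
          · -- t = s.extend m2 with m2 ≠ []
            have prodA : GIS.mk (w.extend u hcu) (w.extend u hcu) rfl * GIS.mk w w rfl
                = GIS.mk (w.extend u hcu) (w.extend u hcu) rfl :=
              GIS.mulB (w.extend u hcu) w u hu0 hcu rfl w rfl hcu rfl
            have prodB : GIS.mk (w.extend u hcu) (w.extend u hcu) rfl
                  * GIS.mk (w.extend u hcu) (w.extend m hcm) hst
                = GIS.mk (w.extend u hcu) (w.extend m hcm) hst :=
              GIS.mulA0 _ _ rfl _ hst hst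
            have step := R.mul (R.refl (GIS.mk (w.extend u hcu) (w.extend u hcu) rfl)) h
            rw [prodA, prodB] at step
            have base : G.Chain w.start ((w.edges ++ u) ++ m2) := by
              rw [List.append_assoc, hm2]
              exact (w.extend m hcm).chain
            have hcm2' : G.Chain (w.extend u hcu).ran m2 :=
              G.chain_append_right (l1 := w.edges ++ u) base
            have hpt : w.extend m hcm = (w.extend u hcu).extend m2 hcm2' :=
              GPath.ext' rfl (by rw [GPath.extend_edges, GPath.extend_edges,
                GPath.extend_edges, List.append_assoc, hm2])
            have h2' : (w.extend u hcu).ran = ((w.extend u hcu).extend m2 hcm2').ran := by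
              have h4 := hst; rw [hpt] at h4; exact h4
            have e2 : GIS.mk (w.extend u hcu) (w.extend m hcm) hst
                = GIS.mk (w.extend u hcu) ((w.extend u hcu).extend m2 hcm2') h2' :=
              GIS.mk_congr rfl hpt _ _
            rw [e2] at step
            have hcy2 : G.ranAux (w.extend u hcu).ran m2 = (w.extend u hcu).ran := by
              have h4 := h2'
              rw [GPath.ran_extend (w.extend u hcu) m2 hcm2'] at h4
              exact h4.symm
            have hss0 := keyCycle hC R (w.extend u hcu) m2 hm20 hcm2' hcy2 (R.symm step)
            have e3 : GIS.mk (w.extend u hcu) (w.extend u hcu) rfl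
                  * GIS.mk (w.extend u hcu) (w.extend m hcm) hst
                = GIS.mk (w.extend u hcu) (w.extend m hcm) hst :=
              GIS.mulA0 _ _ rfl _ hst hst
            have hst0 : R (GIS.mk (w.extend u hcu) (w.extend m hcm) hst) 0 := by
              have h4 := R.mul hss0 (R.refl (GIS.mk (w.extend u hcu) (w.extend m hcm) hst))
              rw [e3, GIS.zero_mul] at h4
              exact h4
            exact R.trans h hst0
        · by_cases hmu : m <+: u
          · obtain ⟨u2, hu2⟩ := hmu
            have hu2ne : u2 ≠ [] := by
              rintro rfl
              exact hum (by rw [← hu2, List.append_nil])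
            have prodA : GIS.mk (w.extend m hcm) (w.extend m hcm) rfl * GIS.mk w w rfl
                = GIS.mk (w.extend m hcm) (w.extend m hcm) rfl :=
              GIS.mulB (w.extend m hcm) w m hm hcm rfl w rfl hcm rfl
            have base : G.Chain w.start ((w.edges ++ m) ++ u2) := by
              rw [List.append_assoc, hu2]
              exact (w.extend u hcu).chain
            have hcu2 : G.Chain (w.extend m hcm).ran u2 :=
              G.chain_append_right (l1 := w.edges ++ m) base
            have hps : w.extend u hcu = (w.extend m hcm).extend u2 hcu2 :=
              GPath.ext' rfl (by rw [GPath.extend_edges, GPath.extend_edges,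
                GPath.extend_edges, List.append_assoc, hu2])
            have h3'' : ((w.extend m hcm).extend u2 hcu2).ran = (w.extend m hcm).ran := by
              have h4 := hst; rw [hps] at h4; exact h4
            have prodB : GIS.mk (w.extend m hcm) (w.extend m hcm) rfl
                  * GIS.mk (w.extend u hcu) (w.extend m hcm) hst
                = GIS.mk ((w.extend m hcm).extend u2 hcu2) (w.extend m hcm) h3'' := by
              have e2 : GIS.mk (w.extend u hcu) (w.extend m hcm) hst
                  = GIS.mk ((w.extend m hcm).extend u2 hcu2) (w.extend m hcm)
                    (by rw [← hps]; exact hst) := GIS.mk_congr hps rfl _ _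
              rw [e2]
              exact GIS.mulA _ _ rfl u2 hcu2 _ _ hcu2 h3''
            have step := R.mul (R.refl (GIS.mk (w.extend m hcm) (w.extend m hcm) rfl)) h
            rw [prodA, prodB] at step
            have hcy3 : G.ranAux (w.extend m hcm).ran u2 = (w.extend m hcm).ran := by
              have h4 := h3''
              rw [GPath.ran_extend (w.extend m hcm) u2 hcu2] at h4
              exact h4
            have htt0 := keyCycleR hC R (w.extend m hcm) u2 hu2ne hcu2 hcy3 (R.symm step)
            have e4 : GIS.mk (w.extend u hcu) (w.extend m hcm) hst
                  * GIS.mk (w.extend m hcm) (w.extend m hcm) rfl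
                = GIS.mk (w.extend u hcu) (w.extend m hcm) hst :=
              GIS.mulA0 _ _ hst _ rfl hst
            have hst0 : R (GIS.mk (w.extend u hcu) (w.extend m hcm) hst) 0 := by
              have h4 := R.mul (R.refl (GIS.mk (w.extend u hcu) (w.extend m hcm) hst)) htt0
              rw [e4, GIS.mul_zero] at h4
              exact h4
            exact R.trans h hst0
          · -- u and m incomparable
            have prodA : GIS.mk w w rfl * GIS.mk (w.extend u hcu) (w.extend u hcu) rfl
                = GIS.mk (w.extend u hcu) (w.extend u hcu) rfl :=
              GIS.mulA w w rfl u hcu _ rfl hcu rfl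
            have prodB : GIS.mk (w.extend u hcu) (w.extend m hcm) hst
                  * GIS.mk (w.extend u hcu) (w.extend u hcu) rfl = 0 := by
              refine GIS.mulC _ _ _ _ _ _ ?_ ?_
              · rintro ⟨-, hp⟩
                rw [GPath.extend_edges, GPath.extend_edges,
                  List.prefix_append_right_inj] at hp
                exact hmu hp
              · rintro ⟨-, hp⟩
                rw [GPath.extend_edges, GPath.extend_edges,
                  List.prefix_append_right_inj] at hp
                exact hum hp
            have step := R.mul h (R.refl (GIS.mk (w.extend u hcu) (w.extend u hcu) rfl))
            rw [prodA, prodB] at step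
            have e3 : GIS.mk (w.extend u hcu) (w.extend u hcu) rfl
                  * GIS.mk (w.extend u hcu) (w.extend m hcm) hst
                = GIS.mk (w.extend u hcu) (w.extend m hcm) hst :=
              GIS.mulA0 _ _ rfl _ hst hst
            have hst0 : R (GIS.mk (w.extend u hcu) (w.extend m hcm) hst) 0 := by
              have h4 := R.mul step (R.refl (GIS.mk (w.extend u hcu) (w.extend m hcm) hst))
              rw [e3, GIS.zero_mul] at h4
              exact h4
            exact R.trans h hst0
    · -- t and w incomparable
      have prod : GIS.mk (w.extend u hcu) t hst * GIS.mk w w rfl = 0 :=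
        GIS.mulC _ _ _ _ _ _ hp1 hp2
      have step := R.mul h (R.refl (GIS.mk w w rfl))
      rw [GIS.mulA0 w w rfl w rfl rfl, prod] at step
      exact step

end Stmt14

namespace Stmt14

variable {G : DGraph}

theorem rees_of_cond (hC : CondC G) (R : Con (GIS G)) : IsReesCon R := by
  refine ⟨{a | R a 0}, ?_, ?_⟩
  · intro a ha c
    constructor
    · have h4 := R.mul ha (R.refl c); rwa [GIS.zero_mul] at h4
    · have h4 := R.mul (R.refl c) ha; rwa [GIS.mul_zero] at h4
  · intro a b
    constructor
    · intro h
      by_cases hab : a = b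
      · exact Or.inr hab
      · left
        suffices ha : R a 0 by exact ⟨ha, R.trans (R.symm h) ha⟩
        cases a with
        | zero => exact R.refl 0
        | mk x y hxy =>
          cases b with
          | zero => exact h
          | mk p q hpq =>
            have conclude : R (GIS.mk y y rfl) 0 → R (GIS.mk x y hxy) 0 := by
              intro hyy
              have e := GIS.mulA0 x y hxy y rfl hxy
              have h4 := R.mul (R.refl (GIS.mk x y hxy)) hyy
              rwa [e, GIS.mul_zero] at h4
            have prodyx : GIS.mk y x hxy.symm * GIS.mk x y hxy = GIS.mk y y rfl :=
              GIS.mulA0 y x hxy.symm y hxy rfl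
            by_cases h1 : x.IsPrefixOf p
            · obtain ⟨u, hc, rfl⟩ := GPath.eq_extend_of_prefix h1
              have hc2 : G.Chain y.ran u := by rw [← hxy]; exact hc
              have h'' : (y.extend u hc2).ran = q.ran := by
                rw [GPath.ran_extend y u hc2, ← hxy, ← GPath.ran_extend x u hc]; exact hpq
              have prod2 : GIS.mk y x hxy.symm * GIS.mk (x.extend u hc) q hpq
                  = GIS.mk (y.extend u hc2) q h'' := GIS.mulA y x hxy.symm u hc q hpq hc2 h''
              have step := R.mul (R.refl (GIS.mk y x hxy.symm)) h
              rw [prodyx, prod2] at step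
              have hne : GIS.mk (y.extend u hc2) q h'' ≠ GIS.mk y y rfl := by
                intro heq
                obtain ⟨hyu, hqy⟩ := GIS.mk_inj heq
                have hu0 : u = [] := by
                  have h5 := congrArg GPath.edges hyu
                  simpa using h5
                subst hu0
                exact hab (GIS.mk_congr (GPath.extend_nil x hc) hqy hpq hxy).symm
              exact conclude
                (main2 hC R y (y.extend u hc2) q (y.prefix_extend u hc2) h'' hne step)
            · by_cases h2 : p.IsPrefixOf x
              · obtain ⟨u, hc, rfl⟩ := GPath.eq_extend_of_prefix h2
                have hu : u ≠ [] := by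
                  rintro rfl
                  exact h1 ⟨rfl, by simp⟩
                have hcq : G.Chain q.ran u := by rw [← hpq]; exact hc
                have h'' : y.ran = (q.extend u hcq).ran := by
                  rw [GPath.ran_extend q u hcq, ← hpq, ← GPath.ran_extend p u hc]
                  exact hxy.symm
                have prod2 : GIS.mk y (p.extend u hc) hxy.symm * GIS.mk p q hpq
                    = GIS.mk y (q.extend u hcq) h'' :=
                  GIS.mulB y p u hu hc hxy.symm q hpq hcq h''
                have step := R.mul (R.refl (GIS.mk y (p.extend u hc) hxy.symm)) h
                rw [prodyx, prod2] at step
                by_cases hqy : q.extend u hcq = y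
                · have prodb : GIS.mk p q hpq * GIS.mk q p hpq.symm = GIS.mk p p rfl :=
                    GIS.mulA0 p q hpq p hpq.symm rfl
                  have proda : GIS.mk (p.extend u hc) y hxy * GIS.mk q p hpq.symm
                      = GIS.mk (p.extend u hc) (p.extend u hc) rfl := by
                    have e2 : GIS.mk (p.extend u hc) y hxy
                        = GIS.mk (p.extend u hc) (q.extend u hcq)
                          (by rw [hqy]; exact hxy) :=
                      GIS.mk_congr rfl hqy.symm _ _
                    rw [e2]
                    exact GIS.mulB (p.extend u hc) q u hu hcq _ p hpq.symm hc rfl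
                  have step2 := R.mul h (R.refl (GIS.mk q p hpq.symm))
                  rw [proda, prodb] at step2
                  have hpp0 := keyBreak hC R p u hu hc (R.symm step2)
                  have hxx0 : R (GIS.mk (p.extend u hc) (p.extend u hc) rfl) 0 :=
                    R.trans step2 hpp0
                  have e3 : GIS.mk (p.extend u hc) (p.extend u hc) rfl
                        * GIS.mk (p.extend u hc) y hxy = GIS.mk (p.extend u hc) y hxy :=
                    GIS.mulA0 _ _ rfl y hxy hxy
                  have h4 := R.mul hxx0 (R.refl (GIS.mk (p.extend u hc) y hxy))
                  rwa [e3, GIS.zero_mul] at h4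
                · have hne : GIS.mk y (q.extend u hcq) h'' ≠ GIS.mk y y rfl := by
                    intro heq
                    exact hqy (GIS.mk_inj heq).2
                  exact conclude
                    (main2 hC R y y (q.extend u hcq) ⟨rfl, List.prefix_rfl⟩ h'' hne step)
              · have prod2 : GIS.mk y x hxy.symm * GIS.mk p q hpq = 0 :=
                  GIS.mulC _ _ _ _ _ _ h1 h2
                have step := R.mul (R.refl (GIS.mk y x hxy.symm)) h
                rw [prodyx, prod2] at step
                exact conclude step
    · rintro (⟨ha, hb⟩ | rfl)
      · exact R.trans ha (R.symm hb)
      · exact R.refl a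

end Stmt14

namespace Stmt14

variable {G : DGraph}

/-- prefix relation on paths is transitive -/
theorem GPath.prefix_trans {a b c : GPath G} (h1 : a.IsPrefixOf b) (h2 : b.IsPrefixOf c) :
    a.IsPrefixOf c :=
  ⟨h1.1.trans h2.1, h1.2.trans h2.2⟩

theorem ranAux_concat (G : DGraph) (z : G.V) (l : List G.Ed) (a : G.Ed) :
    G.ranAux z (l ++ [a]) = G.rng a := by
  rw [G.ranAux_append]; rfl

section Bad

variable (e : G.Ed)

/-- The negation of the condition at `e`: every nontrivial path from `s(e)` to `r(e)`
begins with `e`. -/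
def NC (G : DGraph) (e : G.Ed) : Prop :=
  ∀ p : GPath G, p.edges ≠ [] → p.start = G.src e → p.ran = G.rng e →
    ∃ l, p.edges = e :: l

/-- Vertices reachable from the range of an edge `f ≠ e` emitted by `s(e)`. -/
def Hset (G : DGraph) (e : G.Ed) : Set G.V :=
  {z | ∃ (f : G.Ed) (q : GPath G), f ≠ e ∧ G.src f = G.src e ∧ q.start = G.rng f ∧ q.ran = z}

theorem Hset_her {z : G.V} (hz : z ∈ Hset G e) (l : List G.Ed) (hc : G.Chain z l) :
    G.ranAux z l ∈ Hset G e := by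
  obtain ⟨f, q, hf, hsf, hqs, hqr⟩ := hz
  refine ⟨f, q.extend l (by rw [hqr]; exact hc), hf, hsf, hqs, ?_⟩
  rw [GPath.ran_extend, hqr]

theorem src_not_Hset (hNC : NC G e) : G.src e ∉ Hset G e := by
  rintro ⟨f, q, hf, hsf, hqs, hqr⟩
  have hch : G.Chain (G.src e) (f :: (q.edges ++ [e])) := by
    refine ⟨hsf, ?_⟩
    refine G.chain_append (by rw [← hqs]; exact q.chain) ?_
    have hr : G.ranAux (G.rng f) q.edges = G.src e := by
      rw [← hqs]; exact hqr
    rw [hr]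
    exact ⟨rfl, trivial⟩
  have hP : ∃ l, (⟨G.src e, f :: (q.edges ++ [e]), hch⟩ : GPath G).edges = e :: l := by
    refine hNC _ (by simp) rfl ?_
    show G.ranAux (G.src e) (f :: (q.edges ++ [e])) = G.rng e
    show G.ranAux (G.rng f) (q.edges ++ [e]) = G.rng e
    exact ranAux_concat G _ _ _
  obtain ⟨l, hl⟩ := hP
  have h1 := congrArg List.head? hl
  simp at h1
  exact hf h1

theorem rng_not_Hset (hNC : NC G e) : G.rng e ∉ Hset G e := by
  rintro ⟨f, q, hf, hsf, hqs, hqr⟩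
  have hch : G.Chain (G.src e) (f :: q.edges) := by
    refine ⟨hsf, ?_⟩
    rw [← hqs]; exact q.chain
  have hP : ∃ l, (⟨G.src e, f :: q.edges, hch⟩ : GPath G).edges = e :: l := by
    refine hNC _ (by simp) rfl ?_
    show G.ranAux (G.src e) (f :: q.edges) = G.rng e
    show G.ranAux (G.rng f) q.edges = G.rng e
    rw [← hqs]; exact hqr
  obtain ⟨l, hl⟩ := hP
  have h1 := congrArg List.head? hl
  simp at h1
  exact hf h1

/-- The ideal of elements whose paths end inside `Hset`. -/
def Iset (G : DGraph) (e : G.Ed) : Set (GIS G) :=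
  {a | a = 0 ∨ ∃ x y h, a = GIS.mk x y h ∧ x.ran ∈ Hset G e}

theorem zero_mem_Iset : (0 : GIS G) ∈ Iset G e := Or.inl rfl

theorem mk_mem_Iset {x y : GPath G} {h} :
    GIS.mk x y h ∈ Iset G e ↔ x.ran ∈ Hset G e := by
  constructor
  · rintro (habs | ⟨x', y', h', heq, hx'⟩)
    · exact absurd habs (GIS.mk_ne_zero x y h)
    · obtain ⟨hx, -⟩ := GIS.mk_inj heq
      rw [hx]; exact hx'
  · intro hx
    exact Or.inr ⟨x, y, h, rfl, hx⟩

theorem Iset_ideal : GISIdeal (Iset G e) := by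
  intro a ha c
  rcases ha with rfl | ⟨x, y, h, rfl, hx⟩
  · constructor
    · rw [GIS.zero_mul]; exact zero_mem_Iset e
    · rw [GIS.mul_zero]; exact zero_mem_Iset e
  constructor
  · -- (x y⁻¹) * c
    cases c with
    | zero =>
      show GIS.mk x y h * (0 : GIS G) ∈ Iset G e
      rw [GIS.mul_zero]; exact zero_mem_Iset e
    | mk p q hpq =>
      by_cases h1 : y.IsPrefixOf p
      · obtain ⟨u, hcu, rfl⟩ := GPath.eq_extend_of_prefix h1
        have hcx : G.Chain x.ran u := by rw [h]; exact hcu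
        have h'' : (x.extend u hcx).ran = q.ran := by
          rw [GPath.ran_extend x u hcx, h, ← GPath.ran_extend y u hcu]; exact hpq
        rw [GIS.mulA x y h u hcu q hpq hcx h'']
        rw [mk_mem_Iset]
        rw [GPath.ran_extend]
        exact Hset_her e hx u hcx
      · by_cases h2 : p.IsPrefixOf y
        · obtain ⟨u, hcu, rfl⟩ := GPath.eq_extend_of_prefix h2
          have hu : u ≠ [] := by
            rintro rfl
            exact h1 ⟨rfl, by simp⟩
          have hcq : G.Chain q.ran u := by rw [← hpq]; exact hcu
          have h'' : x.ran = (q.extend u hcq).ran := by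
            rw [GPath.ran_extend q u hcq, ← hpq, ← GPath.ran_extend p u hcu]; exact h
          rw [GIS.mulB x p u hu hcu h q hpq hcq h'']
          rw [mk_mem_Iset]
          exact hx
        · rw [GIS.mulC x _ p q h hpq h1 h2]
          exact zero_mem_Iset e
  · -- c * (x y⁻¹)
    cases c with
    | zero =>
      show (0 : GIS G) * GIS.mk x y h ∈ Iset G e
      rw [GIS.zero_mul]; exact zero_mem_Iset e
    | mk p q hpq =>
      by_cases h1 : q.IsPrefixOf x
      · obtain ⟨u, hcu, rfl⟩ := GPath.eq_extend_of_prefix h1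
        have hcp : G.Chain p.ran u := by rw [hpq]; exact hcu
        have h'' : (p.extend u hcp).ran = y.ran := by
          rw [GPath.ran_extend p u hcp, hpq, ← GPath.ran_extend q u hcu]; exact h
        rw [GIS.mulA p q hpq u hcu y h hcp h'']
        rw [mk_mem_Iset]
        rw [GPath.ran_extend p u hcp, hpq, ← GPath.ran_extend q u hcu]
        exact hx
      · by_cases h2 : x.IsPrefixOf q
        · obtain ⟨u, hcu, rfl⟩ := GPath.eq_extend_of_prefix h2
          have hu : u ≠ [] := by
            rintro rfl
            exact h1 ⟨rfl, by simp⟩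
          have hcy : G.Chain y.ran u := by rw [← h]; exact hcu
          have h'' : p.ran = (y.extend u hcy).ran := by
            rw [GPath.ran_extend y u hcy, ← h, ← GPath.ran_extend x u hcu]; exact hpq
          rw [GIS.mulB p x u hu hcu hpq y h hcy h'']
          rw [mk_mem_Iset]
          -- p.ran = (x.extend u).ran ∈ H since x.ran ∈ H
          rw [hpq, GPath.ran_extend x u hcu]
          exact Hset_her e hx u hcu
        · rw [GIS.mulC p q x _ hpq h h1 h2]
          exact zero_mem_Iset e

end Bad

end Stmt14

namespace Stmt14

variable {G : DGraph}

section Bad2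

variable (e : G.Ed)

theorem ran_extend_eq (x y : GPath G) (h : x.ran = y.ran) (m : List G.Ed) (hc hc') :
    (x.extend m hc).ran = (y.extend m hc').ran := by
  rw [x.ran_extend, y.ran_extend, h]

/-- The path ends with the edge `e`. -/
def EndsE (x : GPath G) : Prop :=
  ∃ (x' : GPath G) (hc : G.Chain x'.ran [e]), x = x'.extend [e] hc

/-- The chain relation generated by simultaneously appending copies of `e`. -/
def Ch (a b : GIS G) : Prop :=
  ∃ (x y : GPath G) (h : x.ran = y.ran) (k l : ℕ)
    (hck : G.Chain x.ran (List.replicate k e)) (hck' : G.Chain y.ran (List.replicate k e))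
    (hcl : G.Chain x.ran (List.replicate l e)) (hcl' : G.Chain y.ran (List.replicate l e)),
    ¬ (EndsE e x ∧ EndsE e y) ∧
    a = GIS.mk (x.extend _ hck) (y.extend _ hck') (ran_extend_eq x y h _ hck hck') ∧
    b = GIS.mk (x.extend _ hcl) (y.extend _ hcl') (ran_extend_eq x y h _ hcl hcl')

theorem chain_rep_le {z : G.V} {k l : ℕ} (hkl : k ≤ l)
    (h : G.Chain z (List.replicate l e)) : G.Chain z (List.replicate k e) := by
  have : List.replicate l e = List.replicate k e ++ List.replicate (l - k) e := by
    rw [← List.replicate_add]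
    congr 1
    omega
  rw [this] at h
  exact G.chain_prefix h

theorem chAux (n : ℕ) : ∀ (x y : GPath G) (h : x.ran = y.ran) (k l : ℕ)
    (hck : G.Chain x.ran (List.replicate k e)) (hck' : G.Chain y.ran (List.replicate k e))
    (hcl : G.Chain x.ran (List.replicate l e)) (hcl' : G.Chain y.ran (List.replicate l e)),
    x.edges.length ≤ n →
    Ch e (GIS.mk (x.extend _ hck) (y.extend _ hck') (ran_extend_eq x y h _ hck hck'))
      (GIS.mk (x.extend _ hcl) (y.extend _ hcl') (ran_extend_eq x y h _ hcl hcl')) := by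
  induction n with
  | zero =>
    intro x y h k l hck hck' hcl hcl' hlen
    by_cases hEE : EndsE e x ∧ EndsE e y
    · obtain ⟨⟨x', hcx', hx⟩, -⟩ := hEE
      exfalso
      have := congrArg (List.length ∘ GPath.edges) hx
      simp [GPath.extend] at this
      omega
    · exact ⟨x, y, h, k, l, hck, hck', hcl, hcl', hEE, rfl, rfl⟩
  | succ n ih =>
    intro x y h k l hck hck' hcl hcl' hlen
    by_cases hEE : EndsE e x ∧ EndsE e y
    · obtain ⟨⟨x', hcx', rfl⟩, ⟨y', hcy', rfl⟩⟩ := hEE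
      have hx'r : x'.ran = G.src e := hcx'.1.symm
      have hy'r : y'.ran = G.src e := hcy'.1.symm
      have h' : x'.ran = y'.ran := by rw [hx'r, hy'r]
      have hre : (x'.extend [e] hcx').ran = G.rng e := by rw [GPath.ran_extend]; rfl
      have hre' : (y'.extend [e] hcy').ran = G.rng e := by rw [GPath.ran_extend]; rfl
      -- chains at x', y' for k+1 and l+1
      have hCk : G.Chain (G.rng e) (List.replicate k e) := by rw [← hre]; exact hck
      have hCk' : G.Chain (G.rng e) (List.replicate k e) := by rw [← hre']; exact hck'
      have hCl : G.Chain (G.rng e) (List.replicate l e) := by rw [← hre]; exact hcl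
      have hCl' : G.Chain (G.rng e) (List.replicate l e) := by rw [← hre']; exact hcl'
      have hck1 : G.Chain x'.ran (List.replicate (k+1) e) := by
        rw [List.replicate_succ]
        exact ⟨hx'r.symm, hCk⟩
      have hck1' : G.Chain y'.ran (List.replicate (k+1) e) := by
        rw [List.replicate_succ]
        exact ⟨hy'r.symm, hCk'⟩
      have hcl1 : G.Chain x'.ran (List.replicate (l+1) e) := by
        rw [List.replicate_succ]
        exact ⟨hx'r.symm, hCl⟩
      have hcl1' : G.Chain y'.ran (List.replicate (l+1) e) := by
        rw [List.replicate_succ]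
        exact ⟨hy'r.symm, hCl'⟩
      have hpx : (x'.extend [e] hcx').extend (List.replicate k e) hck
          = x'.extend (List.replicate (k+1) e) hck1 := by
        refine GPath.ext' rfl ?_
        simp [List.replicate_succ]
      have hpy : (y'.extend [e] hcy').extend (List.replicate k e) hck'
          = y'.extend (List.replicate (k+1) e) hck1' := by
        refine GPath.ext' rfl ?_
        simp [List.replicate_succ]
      have hpx' : (x'.extend [e] hcx').extend (List.replicate l e) hcl
          = x'.extend (List.replicate (l+1) e) hcl1 := by
        refine GPath.ext' rfl ?_
        simp [List.replicate_succ]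
      have hpy' : (y'.extend [e] hcy').extend (List.replicate l e) hcl'
          = y'.extend (List.replicate (l+1) e) hcl1' := by
        refine GPath.ext' rfl ?_
        simp [List.replicate_succ]
      rw [GIS.mk_congr hpx hpy _ (ran_extend_eq x' y' h' _ hck1 hck1'),
        GIS.mk_congr hpx' hpy' _ (ran_extend_eq x' y' h' _ hcl1 hcl1')]
      refine ih x' y' h' (k+1) (l+1) hck1 hck1' hcl1 hcl1' ?_
      have := congrArg (List.length ∘ GPath.edges)
        (rfl : x'.extend [e] hcx' = x'.extend [e] hcx')
      simp [GPath.extend] at hlen ⊢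
      omega
    · exact ⟨x, y, h, k, l, hck, hck', hcl, hcl', hEE, rfl, rfl⟩

theorem ch_ext (x y : GPath G) (h : x.ran = y.ran) (k l : ℕ)
    (hck : G.Chain x.ran (List.replicate k e)) (hck' : G.Chain y.ran (List.replicate k e))
    (hcl : G.Chain x.ran (List.replicate l e)) (hcl' : G.Chain y.ran (List.replicate l e)) :
    Ch e (GIS.mk (x.extend _ hck) (y.extend _ hck') (ran_extend_eq x y h _ hck hck'))
      (GIS.mk (x.extend _ hcl) (y.extend _ hcl') (ran_extend_eq x y h _ hcl hcl')) :=
  chAux e x.edges.length x y h k l hck hck' hcl hcl' le_rfl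

theorem ch_step (x y : GPath G) (h : x.ran = y.ran)
    (hcx : G.Chain x.ran [e]) (hcy : G.Chain y.ran [e]) (h') :
    Ch e (GIS.mk x y h) (GIS.mk (x.extend [e] hcx) (y.extend [e] hcy) h') := by
  have h0x : G.Chain x.ran (List.replicate 0 e) := trivial
  have h0y : G.Chain y.ran (List.replicate 0 e) := trivial
  have h1x : G.Chain x.ran (List.replicate 1 e) := hcx
  have h1y : G.Chain y.ran (List.replicate 1 e) := hcy
  have key := ch_ext e x y h 0 1 h0x h0y h1x h1y
  have e0 : GIS.mk (x.extend (List.replicate 0 e) h0x) (y.extend (List.replicate 0 e) h0y)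
      (ran_extend_eq x y h _ h0x h0y) = GIS.mk x y h :=
    GIS.mk_congr (GPath.extend_nil x h0x) (GPath.extend_nil y h0y) _ _
  have e1 : GIS.mk (x.extend (List.replicate 1 e) h1x) (y.extend (List.replicate 1 e) h1y)
      (ran_extend_eq x y h _ h1x h1y)
      = GIS.mk (x.extend [e] hcx) (y.extend [e] hcy) h' :=
    GIS.mk_congr rfl rfl _ _
  rw [e0, e1] at key
  exact key

end Bad2

end Stmt14

namespace Stmt14

variable {G : DGraph}

section Bad3

variable (e : G.Ed)

/-- The candidate congruence relation. -/
def BadRel (a b : GIS G) : Prop :=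
  (a ∈ Iset G e ∧ b ∈ Iset G e) ∨ a = b ∨ Ch e a b

theorem ranAux_rep_not_mem (hv : G.src e ∉ Hset G e) (hw : G.rng e ∉ Hset G e)
    {z : G.V} (hz : z = G.src e) (k : ℕ) : G.ranAux z (List.replicate k e) ∉ Hset G e := by
  cases k with
  | zero => subst hz; exact hv
  | succ k =>
    rw [List.replicate_succ', ranAux_concat]
    exact hw

theorem ch_cases (hv : G.src e ∉ Hset G e) (hw : G.rng e ∉ Hset G e) {a b : GIS G}
    (hab : Ch e a b) :
    a = b ∨ (a ∉ Iset G e ∧ b ∉ Iset G e ∧ a ≠ 0 ∧ b ≠ 0) := by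
  obtain ⟨x, y, h, k, l, hck, hck', hcl, hcl', hEE, ha, hb⟩ := hab
  by_cases hkl : k = l
  · subst hkl
    exact Or.inl (by rw [ha, hb])
  · right
    have hxr : x.ran = G.src e := by
      rcases Nat.lt_or_ge 0 k with hk | hk
      · obtain ⟨k', rfl⟩ : ∃ k', k = k' + 1 := ⟨k - 1, by omega⟩
        rw [List.replicate_succ] at hck
        exact hck.1.symm
      · have hl : 0 < l := by omega
        obtain ⟨l', rfl⟩ : ∃ l', l = l' + 1 := ⟨l - 1, by omega⟩
        rw [List.replicate_succ] at hcl
        exact hcl.1.symm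
    have hmema : (x.extend (List.replicate k e) hck).ran ∉ Hset G e := by
      rw [GPath.ran_extend]
      exact ranAux_rep_not_mem e hv hw hxr k
    have hmemb : (x.extend (List.replicate l e) hcl).ran ∉ Hset G e := by
      rw [GPath.ran_extend]
      exact ranAux_rep_not_mem e hv hw hxr l
    refine ⟨?_, ?_, ?_, ?_⟩
    · rw [ha, mk_mem_Iset]; exact hmema
    · rw [hb, mk_mem_Iset]; exact hmemb
    · rw [ha]; exact GIS.mk_ne_zero _ _ _
    · rw [hb]; exact GIS.mk_ne_zero _ _ _

theorem badRel_refl (a : GIS G) : BadRel e a a := Or.inr (Or.inl rfl)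

theorem badRel_symm {a b : GIS G} (h : BadRel e a b) : BadRel e b a := by
  rcases h with ⟨ha, hb⟩ | rfl | hch
  · exact Or.inl ⟨hb, ha⟩
  · exact badRel_refl e a
  · obtain ⟨x, y, h, k, l, hck, hck', hcl, hcl', hEE, ha, hb⟩ := hch
    exact Or.inr (Or.inr ⟨x, y, h, l, k, hcl, hcl', hck, hck', hEE, hb, ha⟩)

theorem endsE_of_ext_eq {x x2 : GPath G} {l k2 : ℕ} (hlt : k2 < l)
    {hcl : G.Chain x.ran (List.replicate l e)} {hck2 : G.Chain x2.ran (List.replicate k2 e)}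
    (P : x.extend (List.replicate l e) hcl = x2.extend (List.replicate k2 e) hck2) :
    EndsE e x2 := by
  obtain ⟨d, hld⟩ : ∃ d, l = (d + 1) + k2 := ⟨l - k2 - 1, by omega⟩
  have hsplit : List.replicate l e = List.replicate (d + 1) e ++ List.replicate k2 e := by
    rw [hld, List.replicate_add]
  have hEd : x2.edges = x.edges ++ List.replicate (d + 1) e := by
    have hP := congrArg GPath.edges P
    rw [GPath.extend_edges, GPath.extend_edges, hsplit, ← List.append_assoc] at hP
    exact (List.append_cancel_right hP).symm
  have hS := congrArg GPath.start P
  have hcd : G.Chain x.ran (List.replicate (d + 1) e) := by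
    rw [hsplit] at hcl
    exact G.chain_prefix hcl
  have hcd' : G.Chain x.ran (List.replicate d e) := chain_rep_le e (by omega) hcd
  have hce : G.Chain (x.extend (List.replicate d e) hcd').ran [e] := by
    have h2 : G.Chain x.ran (List.replicate d e ++ [e]) := by
      rw [← List.replicate_succ']
      exact hcd
    have h3 := G.chain_append_right (v := x.start) (l1 := x.edges ++ List.replicate d e)
      (l2 := [e]) (by rw [List.append_assoc]; exact G.chain_append x.chain h2)
    exact h3
  refine ⟨x.extend (List.replicate d e) hcd', hce, ?_⟩
  refine GPath.ext' ?_ ?_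
  · exact hS.symm
  · show x2.edges = (x.edges ++ List.replicate d e) ++ [e]
    rw [hEd, List.replicate_succ', List.append_assoc]

theorem badRel_trans (hv : G.src e ∉ Hset G e) (hw : G.rng e ∉ Hset G e) {a b c : GIS G}
    (hab : BadRel e a b) (hbc : BadRel e b c) : BadRel e a c := by
  rcases hab with ⟨ha, hb⟩ | rfl | hch
  · rcases hbc with ⟨hb', hc⟩ | rfl | hch'
    · exact Or.inl ⟨ha, hc⟩
    · exact Or.inl ⟨ha, hb⟩
    · rcases ch_cases e hv hw hch' with rfl | ⟨hb2, hc2, -, -⟩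
      · exact Or.inl ⟨ha, hb⟩
      · exact absurd hb hb2
  · exact hbc
  · rcases hbc with ⟨hb', hc⟩ | rfl | hch'
    · rcases ch_cases e hv hw hch with rfl | ⟨ha2, hb2, -, -⟩
      · exact Or.inl ⟨hb', hc⟩
      · exact absurd hb' hb2
    · exact Or.inr (Or.inr hch)
    · -- both chain relations
      obtain ⟨x, y, h, k, l, hck, hck', hcl, hcl', hEE, ha, hb⟩ := hch
      obtain ⟨x2, y2, h2, k2, l2, hck2, hck2', hcl2, hcl2', hEE2, hb2, hc2⟩ := hch'
      rw [hb] at hb2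
      obtain ⟨Px, Py⟩ := GIS.mk_inj hb2
      have hlk : l = k2 := by
        by_contra hne
        rcases Nat.lt_or_ge k2 l with hlt | hge
        · exact hEE2 ⟨endsE_of_ext_eq e hlt Px, endsE_of_ext_eq e hlt Py⟩
        · have hlt : l < k2 := by omega
          exact hEE ⟨endsE_of_ext_eq e hlt Px.symm, endsE_of_ext_eq e hlt Py.symm⟩
      subst hlk
      have hxx : x = x2 := by
        have hs12 := congrArg GPath.start Px
        refine GPath.ext' hs12 ?_
        have hP := congrArg GPath.edges Px
        rw [GPath.extend_edges, GPath.extend_edges] at hP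
        exact List.append_cancel_right hP
      have hyy : y = y2 := by
        have hs12 := congrArg GPath.start Py
        refine GPath.ext' hs12 ?_
        have hP := congrArg GPath.edges Py
        rw [GPath.extend_edges, GPath.extend_edges] at hP
        exact List.append_cancel_right hP
      subst hxx; subst hyy
      refine Or.inr (Or.inr ⟨x, y, h, k, l2, hck, hck', hcl2, hcl2', hEE, ha, ?_⟩)
      rw [hc2]

end Bad3

end Stmt14

namespace Stmt14

variable {G : DGraph}

section Bad4

variable (e : G.Ed)

theorem slLeft (c : GIS G) (x y : GPath G) (h : x.ran = y.ran)
    (hcx : G.Chain x.ran [e]) (hcy : G.Chain y.ran [e]) (h') :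
    BadRel e (c * GIS.mk x y h)
      (c * GIS.mk (x.extend [e] hcx) (y.extend [e] hcy) h') := by
  cases c with
  | zero => exact badRel_refl e 0
  | mk p q hpq =>
    by_cases hq1 : q.IsPrefixOf x
    · obtain ⟨u, hcu, rfl⟩ := GPath.eq_extend_of_prefix hq1
      have hcp : G.Chain p.ran u := by rw [hpq]; exact hcu
      have h1'' : (p.extend u hcp).ran = y.ran := by
        rw [GPath.ran_extend p u hcp, hpq, ← GPath.ran_extend q u hcu]; exact h
      have P1 : GIS.mk p q hpq * GIS.mk (q.extend u hcu) y h
          = GIS.mk (p.extend u hcp) y h1'' := GIS.mulA p q hpq u hcu y h hcp h1''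
      have hcx2 := hcx
      rw [GPath.ran_extend q u hcu] at hcx2
      have hc2 : G.Chain q.ran (u ++ [e]) := G.chain_append hcu hcx2
      have hx2 : (q.extend u hcu).extend [e] hcx = q.extend (u ++ [e]) hc2 :=
        GPath.ext' rfl (by simp)
      have hcp2 : G.Chain p.ran (u ++ [e]) := by rw [hpq]; exact hc2
      have h2'' : (p.extend (u ++ [e]) hcp2).ran = (y.extend [e] hcy).ran := by
        rw [GPath.ran_extend, GPath.ran_extend, ranAux_concat]
        rfl
      have P2 : GIS.mk p q hpq
            * GIS.mk ((q.extend u hcu).extend [e] hcx) (y.extend [e] hcy) h'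
          = GIS.mk (p.extend (u ++ [e]) hcp2) (y.extend [e] hcy) h2'' := by
        rw [GIS.mk_congr hx2 rfl h' (by rw [← hx2]; exact h')]
        exact GIS.mulA p q hpq (u ++ [e]) hc2 _ _ hcp2 h2''
      rw [P1, P2]
      have hpe : G.Chain (p.extend u hcp).ran [e] := by
        rw [show (p.extend u hcp).ran = (q.extend u hcu).ran by
          rw [GPath.ran_extend, GPath.ran_extend, hpq]]
        exact hcx
      have hpeq : p.extend (u ++ [e]) hcp2 = (p.extend u hcp).extend [e] hpe :=
        GPath.ext' rfl (by simp)
      rw [GIS.mk_congr hpeq rfl h2'' (by rw [← hpeq]; exact h2'')]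
      exact Or.inr (Or.inr (ch_step e (p.extend u hcp) y h1'' hpe hcy _))
    · by_cases hq2 : x.IsPrefixOf q
      · obtain ⟨m, hcm, rfl⟩ := GPath.eq_extend_of_prefix hq2
        have hm : m ≠ [] := by rintro rfl; exact hq1 ⟨rfl, by simp⟩
        obtain ⟨f, m', rfl⟩ : ∃ f m', m = f :: m' := by
          cases m with
          | nil => exact absurd rfl hm
          | cons f m' => exact ⟨f, m', rfl⟩
        by_cases hfe : f = e
        · subst f
          have hcym : G.Chain y.ran (e :: m') := by rw [← h]; exact hcm
          have hB1 : p.ran = (y.extend (e :: m') hcym).ran := by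
            rw [GPath.ran_extend y, ← h, ← GPath.ran_extend x (e :: m') hcm]; exact hpq
          have P1 : GIS.mk p (x.extend (e :: m') hcm) hpq * GIS.mk x y h
              = GIS.mk p (y.extend (e :: m') hcym) hB1 :=
            GIS.mulB p x (e :: m') (by simp) hcm hpq y h hcym hB1
          cases m' with
          | nil =>
            have P2 : GIS.mk p (x.extend [e] hcm) hpq
                  * GIS.mk (x.extend [e] hcx) (y.extend [e] hcy) h'
                = GIS.mk p (y.extend [e] hcy) (hpq.trans h') :=
              GIS.mulA0 p (x.extend [e] hcm) hpq (y.extend [e] hcy) h' (hpq.trans h')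
            rw [P1, P2]
            exact badRel_refl e _
          | cons g m'' =>
            have hc3 : G.Chain (x.extend [e] hcx).ran (g :: m'') := by
              rw [GPath.ran_extend]
              exact hcm.2
            have hcy3 : G.Chain (y.extend [e] hcy).ran (g :: m'') := by
              rw [GPath.ran_extend]
              exact hcm.2
            have hx3 : x.extend (e :: g :: m'') hcm
                = (x.extend [e] hcx).extend (g :: m'') hc3 := GPath.ext' rfl (by simp)
            have hy3 : (y.extend [e] hcy).extend (g :: m'') hcy3
                = y.extend (e :: g :: m'') hcym := GPath.ext' rfl (by simp)
            have hB2 : p.ran = ((y.extend [e] hcy).extend (g :: m'') hcy3).ran := by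
              rw [hy3]; exact hB1
            have P2 : GIS.mk p (x.extend (e :: g :: m'') hcm) hpq
                  * GIS.mk (x.extend [e] hcx) (y.extend [e] hcy) h'
                = GIS.mk p ((y.extend [e] hcy).extend (g :: m'') hcy3) hB2 := by
              rw [GIS.mk_congr rfl hx3 hpq (by rw [← hx3]; exact hpq)]
              exact GIS.mulB p (x.extend [e] hcx) (g :: m'') (by simp) hc3 _ _ h' hcy3 hB2
            rw [P1, P2, GIS.mk_congr rfl hy3 hB2 hB1]
            exact badRel_refl e _
        · -- f ≠ e : first product lands in the ideal, second is zero
          have hcym : G.Chain y.ran (f :: m') := by rw [← h]; exact hcm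
          have hB1 : p.ran = (y.extend (f :: m') hcym).ran := by
            rw [GPath.ran_extend y, ← h, ← GPath.ran_extend x (f :: m') hcm]; exact hpq
          have P1 : GIS.mk p (x.extend (f :: m') hcm) hpq * GIS.mk x y h
              = GIS.mk p (y.extend (f :: m') hcym) hB1 :=
            GIS.mulB p x (f :: m') (by simp) hcm hpq y h hcym hB1
          have P2 : GIS.mk p (x.extend (f :: m') hcm) hpq
                * GIS.mk (x.extend [e] hcx) (y.extend [e] hcy) h' = 0 := by
            refine GIS.mulC _ _ _ _ _ _ ?_ ?_
            · exact GPath.not_prefix_extend_ne hfe hcm hcx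
            · exact GPath.not_prefix_extend_ne (Ne.symm hfe) hcx hcm
          rw [P1, P2]
          refine Or.inl ⟨?_, zero_mem_Iset e⟩
          rw [mk_mem_Iset]
          have hxr : x.ran = G.src e := hcx.1.symm
          rw [hpq, GPath.ran_extend]
          refine ⟨f, ⟨G.rng f, m', hcm.2⟩, hfe, ?_, rfl, ?_⟩
          · rw [← hxr]; exact hcm.1
          · rfl
      · -- incomparable
        have P1 := GIS.mulC p q x y hpq h hq1 hq2
        have P2 : GIS.mk p q hpq
              * GIS.mk (x.extend [e] hcx) (y.extend [e] hcy) h' = 0 := by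
          refine GIS.mulC _ _ _ _ _ _ ?_ ?_
          · rintro ⟨hs, hp⟩
            rw [GPath.extend_edges] at hp
            rcases List.prefix_concat_iff.mp hp with hp2 | hp2
            · exact hq2 ⟨hs.symm, by rw [hp2]; exact ⟨[e], rfl⟩⟩
            · exact hq1 ⟨hs, hp2⟩
          · rintro ⟨hs, hp⟩
            exact hq2 ⟨hs, List.IsPrefix.trans ⟨[e], rfl⟩ hp⟩
        rw [P1, P2]
        exact badRel_refl e 0

end Bad4

end Stmt14

namespace Stmt14

variable {G : DGraph}

section Bad5

variable (e : G.Ed)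

theorem slRight (c : GIS G) (x y : GPath G) (h : x.ran = y.ran)
    (hcx : G.Chain x.ran [e]) (hcy : G.Chain y.ran [e]) (h') :
    BadRel e (GIS.mk x y h * c)
      (GIS.mk (x.extend [e] hcx) (y.extend [e] hcy) h' * c) := by
  cases c with
  | zero => exact badRel_refl e 0
  | mk p q hpq =>
    by_cases hp1 : y.IsPrefixOf p
    · obtain ⟨u, hcu, rfl⟩ := GPath.eq_extend_of_prefix hp1
      cases u with
      | nil =>
        have hq2 : y.ran = q.ran := by
          have h2 := hpq; rw [GPath.extend_nil] at h2; exact h2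
        have e0 : GIS.mk (y.extend [] hcu) q hpq = GIS.mk y q hq2 :=
          GIS.mk_congr (GPath.extend_nil y hcu) rfl _ _
        have P1 : GIS.mk x y h * GIS.mk (y.extend [] hcu) q hpq
            = GIS.mk x q (h.trans hq2) := by
          rw [e0]; exact GIS.mulA0 x y h q hq2 (h.trans hq2)
        have hcq : G.Chain q.ran [e] := by rw [← hq2]; exact hcy
        have h2'' : (x.extend [e] hcx).ran = (q.extend [e] hcq).ran :=
          ran_extend_eq x q (h.trans hq2) [e] hcx hcq
        have P2 : GIS.mk (x.extend [e] hcx) (y.extend [e] hcy) h'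
              * GIS.mk (y.extend [] hcu) q hpq
            = GIS.mk (x.extend [e] hcx) (q.extend [e] hcq) h2'' := by
          rw [e0]
          exact GIS.mulB (x.extend [e] hcx) y [e] (by simp) hcy h' q hq2 hcq h2''
        rw [P1, P2]
        exact Or.inr (Or.inr (ch_step e x q (h.trans hq2) hcx hcq _))
      | cons f u' =>
        by_cases hfe : f = e
        · subst f
          have hcxu : G.Chain x.ran (e :: u') := by rw [h]; exact hcu
          have hA1 : (x.extend (e :: u') hcxu).ran = q.ran := by
            rw [GPath.ran_extend, h, ← GPath.ran_extend y (e :: u') hcu]; exact hpq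
          have P1 := GIS.mulA x y h (e :: u') hcu q hpq hcxu hA1
          cases u' with
          | nil =>
            have P2 : GIS.mk (x.extend [e] hcx) (y.extend [e] hcy) h'
                  * GIS.mk (y.extend [e] hcu) q hpq
                = GIS.mk (x.extend [e] hcx) q (h'.trans hpq) :=
              GIS.mulA0 _ _ h' q hpq (h'.trans hpq)
            rw [P1, P2]
            exact badRel_refl e _
          | cons g u'' =>
            have hc3 : G.Chain (y.extend [e] hcy).ran (g :: u'') := by
              rw [GPath.ran_extend]; exact hcu.2
            have hy3 : y.extend (e :: g :: u'') hcu
                = (y.extend [e] hcy).extend (g :: u'') hc3 := GPath.ext' rfl (by simp)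
            have hc4 : G.Chain (x.extend [e] hcx).ran (g :: u'') := by
              rw [GPath.ran_extend]; exact hcxu.2
            have hx4 : (x.extend [e] hcx).extend (g :: u'') hc4
                = x.extend (e :: g :: u'') hcxu := GPath.ext' rfl (by simp)
            have hA2 : ((x.extend [e] hcx).extend (g :: u'') hc4).ran = q.ran := by
              rw [hx4]; exact hA1
            have P2 : GIS.mk (x.extend [e] hcx) (y.extend [e] hcy) h'
                  * GIS.mk (y.extend (e :: g :: u'') hcu) q hpq
                = GIS.mk ((x.extend [e] hcx).extend (g :: u'') hc4) q hA2 := by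
              rw [GIS.mk_congr hy3 rfl hpq (by rw [← hy3]; exact hpq)]
              exact GIS.mulA _ _ h' (g :: u'') hc3 q _ hc4 hA2
            rw [P1, P2, GIS.mk_congr hx4 rfl hA2 hA1]
            exact badRel_refl e _
        · have hcxu : G.Chain x.ran (f :: u') := by rw [h]; exact hcu
          have hA1 : (x.extend (f :: u') hcxu).ran = q.ran := by
            rw [GPath.ran_extend, h, ← GPath.ran_extend y (f :: u') hcu]; exact hpq
          have P1 := GIS.mulA x y h (f :: u') hcu q hpq hcxu hA1
          have P2 : GIS.mk (x.extend [e] hcx) (y.extend [e] hcy) h'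
                * GIS.mk (y.extend (f :: u') hcu) q hpq = 0 := by
            refine GIS.mulC _ _ _ _ _ _ ?_ ?_
            · exact GPath.not_prefix_extend_ne (Ne.symm hfe) hcy hcu
            · exact GPath.not_prefix_extend_ne hfe hcu hcy
          rw [P1, P2]
          refine Or.inl ⟨?_, zero_mem_Iset e⟩
          rw [mk_mem_Iset, GPath.ran_extend]
          have hxr : x.ran = G.src e := hcx.1.symm
          refine ⟨f, ⟨G.rng f, u', hcu.2⟩, hfe, ?_, rfl, ?_⟩
          · rw [← hxr, h]; exact hcu.1
          · rfl
    · by_cases hp2 : p.IsPrefixOf y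
      · obtain ⟨m, hcm, rfl⟩ := GPath.eq_extend_of_prefix hp2
        have hm : m ≠ [] := by rintro rfl; exact hp1 ⟨rfl, by simp⟩
        have hcqm : G.Chain q.ran m := by rw [← hpq]; exact hcm
        have hB1 : x.ran = (q.extend m hcqm).ran := by
          rw [GPath.ran_extend q, ← hpq, ← GPath.ran_extend p m hcm]; exact h
        have P1 := GIS.mulB x p m hm hcm h q hpq hcqm hB1
        have hcy2 := hcy
        rw [GPath.ran_extend p m hcm] at hcy2
        have hcm2 : G.Chain p.ran (m ++ [e]) := G.chain_append hcm hcy2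
        have hy2 : (p.extend m hcm).extend [e] hcy = p.extend (m ++ [e]) hcm2 :=
          GPath.ext' rfl (by simp)
        have hcq2 : G.Chain q.ran (m ++ [e]) := by rw [← hpq]; exact hcm2
        have hB2' : (x.extend [e] hcx).ran = (q.extend (m ++ [e]) hcq2).ran := by
          rw [GPath.ran_extend, GPath.ran_extend, ranAux_concat]
          rfl
        have P2 : GIS.mk (x.extend [e] hcx) ((p.extend m hcm).extend [e] hcy) h'
              * GIS.mk p q hpq
            = GIS.mk (x.extend [e] hcx) (q.extend (m ++ [e]) hcq2) hB2' := by
          rw [GIS.mk_congr rfl hy2 h' (by rw [← hy2]; exact h')]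
          exact GIS.mulB _ p (m ++ [e]) (by simp) hcm2 _ q hpq hcq2 hB2'
        have hcqe : G.Chain (q.extend m hcqm).ran [e] := by
          rw [GPath.ran_extend q m hcqm, ← hpq]; exact hcy2
        have hq3 : q.extend (m ++ [e]) hcq2 = (q.extend m hcqm).extend [e] hcqe :=
          GPath.ext' rfl (by simp)
        rw [P1, P2, GIS.mk_congr rfl hq3 hB2' (by rw [← hq3]; exact hB2')]
        exact Or.inr (Or.inr (ch_step e x (q.extend m hcqm) hB1 hcx hcqe _))
      · have P1 := GIS.mulC x y p q h hpq hp1 hp2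
        have P2 : GIS.mk (x.extend [e] hcx) (y.extend [e] hcy) h' * GIS.mk p q hpq
            = 0 := by
          refine GIS.mulC _ _ _ _ _ _ ?_ ?_
          · rintro ⟨hs, hp⟩
            exact hp1 ⟨hs, List.IsPrefix.trans ⟨[e], rfl⟩ hp⟩
          · rintro ⟨hs, hp⟩
            rw [GPath.extend_edges] at hp
            rcases List.prefix_concat_iff.mp hp with hp2' | hp2'
            · exact hp1 ⟨hs.symm, by rw [hp2']; exact ⟨[e], rfl⟩⟩
            · exact hp2 ⟨hs, hp2'⟩
        rw [P1, P2]
        exact badRel_refl e 0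

end Bad5

end Stmt14

namespace Stmt14

variable {G : DGraph}

section Bad6

variable (e : G.Ed)

theorem compat_left_chain (hv : G.src e ∉ Hset G e) (hw : G.rng e ∉ Hset G e)
    (c : GIS G) (x y : GPath G) (h : x.ran = y.ran) (i j : ℕ) (hij : i ≤ j)
    (hcj : G.Chain x.ran (List.replicate j e)) (hcj' : G.Chain y.ran (List.replicate j e))
    (hci : G.Chain x.ran (List.replicate i e)) (hci' : G.Chain y.ran (List.replicate i e)) :
    BadRel e (c * GIS.mk (x.extend _ hci) (y.extend _ hci') (ran_extend_eq x y h _ hci hci'))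
      (c * GIS.mk (x.extend _ hcj) (y.extend _ hcj') (ran_extend_eq x y h _ hcj hcj')) := by
  induction j, hij using Nat.le_induction with
  | base => exact badRel_refl e _
  | succ j hij ih =>
    have hcjx : G.Chain x.ran (List.replicate j e) := chain_rep_le e (by omega) hcj
    have hcjy : G.Chain y.ran (List.replicate j e) := chain_rep_le e (by omega) hcj'
    have hstep1 := ih hcjx hcjy
    -- chains for the appended edge
    have hcex : G.Chain (x.extend (List.replicate j e) hcjx).ran [e] := by
      rw [GPath.ran_extend]
      exact G.chain_append_right (v := x.ran) (l1 := List.replicate j e) (l2 := [e])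
        (by rw [← List.replicate_succ']; exact hcj)
    have hcey : G.Chain (y.extend (List.replicate j e) hcjy).ran [e] := by
      rw [GPath.ran_extend]
      exact G.chain_append_right (v := y.ran) (l1 := List.replicate j e) (l2 := [e])
        (by rw [← List.replicate_succ']; exact hcj')
    have hpx : (x.extend (List.replicate j e) hcjx).extend [e] hcex
        = x.extend (List.replicate (j+1) e) hcj := by
      refine GPath.ext' rfl ?_
      show (x.edges ++ List.replicate j e) ++ [e] = x.edges ++ List.replicate (j+1) e
      rw [List.replicate_succ', List.append_assoc]
    have hpy : (y.extend (List.replicate j e) hcjy).extend [e] hcey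
        = y.extend (List.replicate (j+1) e) hcj' := by
      refine GPath.ext' rfl ?_
      show (y.edges ++ List.replicate j e) ++ [e] = y.edges ++ List.replicate (j+1) e
      rw [List.replicate_succ', List.append_assoc]
    have hstep2 := slLeft e c (x.extend (List.replicate j e) hcjx)
      (y.extend (List.replicate j e) hcjy) (ran_extend_eq x y h _ hcjx hcjy) hcex hcey
      (ran_extend_eq _ _ (ran_extend_eq x y h _ hcjx hcjy) [e] hcex hcey)
    rw [GIS.mk_congr hpx hpy _ (ran_extend_eq x y h _ hcj hcj')] at hstep2
    exact badRel_trans e hv hw hstep1 hstep2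

theorem compat_right_chain (hv : G.src e ∉ Hset G e) (hw : G.rng e ∉ Hset G e)
    (c : GIS G) (x y : GPath G) (h : x.ran = y.ran) (i j : ℕ) (hij : i ≤ j)
    (hcj : G.Chain x.ran (List.replicate j e)) (hcj' : G.Chain y.ran (List.replicate j e))
    (hci : G.Chain x.ran (List.replicate i e)) (hci' : G.Chain y.ran (List.replicate i e)) :
    BadRel e (GIS.mk (x.extend _ hci) (y.extend _ hci') (ran_extend_eq x y h _ hci hci') * c)
      (GIS.mk (x.extend _ hcj) (y.extend _ hcj') (ran_extend_eq x y h _ hcj hcj') * c) := by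
  induction j, hij using Nat.le_induction with
  | base => exact badRel_refl e _
  | succ j hij ih =>
    have hcjx : G.Chain x.ran (List.replicate j e) := chain_rep_le e (by omega) hcj
    have hcjy : G.Chain y.ran (List.replicate j e) := chain_rep_le e (by omega) hcj'
    have hstep1 := ih hcjx hcjy
    have hcex : G.Chain (x.extend (List.replicate j e) hcjx).ran [e] := by
      rw [GPath.ran_extend]
      exact G.chain_append_right (v := x.ran) (l1 := List.replicate j e) (l2 := [e])
        (by rw [← List.replicate_succ']; exact hcj)
    have hcey : G.Chain (y.extend (List.replicate j e) hcjy).ran [e] := by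
      rw [GPath.ran_extend]
      exact G.chain_append_right (v := y.ran) (l1 := List.replicate j e) (l2 := [e])
        (by rw [← List.replicate_succ']; exact hcj')
    have hpx : (x.extend (List.replicate j e) hcjx).extend [e] hcex
        = x.extend (List.replicate (j+1) e) hcj := by
      refine GPath.ext' rfl ?_
      show (x.edges ++ List.replicate j e) ++ [e] = x.edges ++ List.replicate (j+1) e
      rw [List.replicate_succ', List.append_assoc]
    have hpy : (y.extend (List.replicate j e) hcjy).extend [e] hcey
        = y.extend (List.replicate (j+1) e) hcj' := by
      refine GPath.ext' rfl ?_
      show (y.edges ++ List.replicate j e) ++ [e] = y.edges ++ List.replicate (j+1) e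
      rw [List.replicate_succ', List.append_assoc]
    have hstep2 := slRight e c (x.extend (List.replicate j e) hcjx)
      (y.extend (List.replicate j e) hcjy) (ran_extend_eq x y h _ hcjx hcjy) hcex hcey
      (ran_extend_eq _ _ (ran_extend_eq x y h _ hcjx hcjy) [e] hcex hcey)
    rw [GIS.mk_congr hpx hpy _ (ran_extend_eq x y h _ hcj hcj')] at hstep2
    exact badRel_trans e hv hw hstep1 hstep2

theorem compat_left (hv : G.src e ∉ Hset G e) (hw : G.rng e ∉ Hset G e)
    (c a b : GIS G) (hab : BadRel e a b) : BadRel e (c * a) (c * b) := by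
  rcases hab with ⟨ha, hb⟩ | rfl | hch
  · exact Or.inl ⟨(Iset_ideal e a ha c).2, (Iset_ideal e b hb c).2⟩
  · exact badRel_refl e _
  · obtain ⟨x, y, h, k, l, hck, hck', hcl, hcl', hEE, rfl, rfl⟩ := hch
    rcases le_total k l with hkl | hkl
    · exact compat_left_chain e hv hw c x y h k l hkl hcl hcl' hck hck'
    · exact badRel_symm e (compat_left_chain e hv hw c x y h l k hkl hck hck' hcl hcl')

theorem compat_right (hv : G.src e ∉ Hset G e) (hw : G.rng e ∉ Hset G e)
    (c a b : GIS G) (hab : BadRel e a b) : BadRel e (a * c) (b * c) := by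
  rcases hab with ⟨ha, hb⟩ | rfl | hch
  · exact Or.inl ⟨(Iset_ideal e a ha c).1, (Iset_ideal e b hb c).1⟩
  · exact badRel_refl e _
  · obtain ⟨x, y, h, k, l, hck, hck', hcl, hcl', hEE, rfl, rfl⟩ := hch
    rcases le_total k l with hkl | hkl
    · exact compat_right_chain e hv hw c x y h k l hkl hcl hcl' hck hck'
    · exact badRel_symm e (compat_right_chain e hv hw c x y h l k hkl hck hck' hcl hcl')

/-- The non-Rees congruence obtained when the condition fails at `e`. -/
def badCon (hNC : NC G e) : Con (GIS G) :=
  ⟨⟨BadRel e, ⟨badRel_refl e, badRel_symm e,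
      badRel_trans e (src_not_Hset e hNC) (rng_not_Hset e hNC)⟩⟩,
    fun {w x y z} h1 h2 =>
      badRel_trans e (src_not_Hset e hNC) (rng_not_Hset e hNC)
        (compat_right e (src_not_Hset e hNC) (rng_not_Hset e hNC) y w x h1)
        (compat_left e (src_not_Hset e hNC) (rng_not_Hset e hNC) x y z h2)⟩

end Bad6

theorem cond_of_rees (hall : ∀ R : Con (GIS G), IsReesCon R) : CondC G := by
  intro e
  by_contra hne
  push_neg at hne
  have hNC : NC G e := by
    intro p hne0 hs hr
    obtain ⟨t, ht, hpt⟩ := hne p hne0 hs hr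
    exact ⟨t.edges, by rw [hpt]; rfl⟩
  obtain ⟨J, hJid, hJiff⟩ := hall (badCon e hNC)
  have hc1 : G.Chain (GPath.ofVertex G (G.src e)).ran [e] := ⟨rfl, trivial⟩
  set v0 : GPath G := GPath.ofVertex G (G.src e) with hv0
  have hch : Ch e (GIS.mk v0 v0 rfl)
      (GIS.mk (v0.extend [e] hc1) (v0.extend [e] hc1) rfl) :=
    ch_step e v0 v0 rfl hc1 hc1 rfl
  have hRel : (badCon e hNC) (GIS.mk v0 v0 rfl)
      (GIS.mk (v0.extend [e] hc1) (v0.extend [e] hc1) rfl) := Or.inr (Or.inr hch)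
  have hne2 : GIS.mk v0 v0 rfl ≠ GIS.mk (v0.extend [e] hc1) (v0.extend [e] hc1) rfl := by
    intro hEq
    have h1 := congrArg GPath.edges (GIS.mk_inj hEq).1
    simp [hv0, GPath.ofVertex] at h1
  have hvJ : GIS.mk v0 v0 rfl ∈ J := by
    rcases (hJiff _ _).mp hRel with ⟨h1, h2⟩ | hEq
    · exact h1
    · exact absurd hEq hne2
  have h0J : (0 : GIS G) ∈ J := by
    have h2 := (hJid _ hvJ 0).1
    rwa [GIS.mul_zero] at h2
  have hR0 : (badCon e hNC) (GIS.mk v0 v0 rfl) 0 := (hJiff _ _).mpr (Or.inl ⟨hvJ, h0J⟩)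
  have hR0' : BadRel e (GIS.mk v0 v0 rfl) 0 := hR0
  rcases hR0' with ⟨hvI, -⟩ | hEq | hch0
  · rw [mk_mem_Iset] at hvI
    exact src_not_Hset e hNC hvI
  · exact GIS.mk_ne_zero _ _ _ hEq
  · obtain ⟨x, y, h, k, l, c1, c2, c3, c4, c5, c6, hb0⟩ := hch0
    exact GIS.mk_ne_zero _ _ _ hb0.symm

end Stmt14
/-- Every congruence on `G(E)` is a Rees congruence iff for every edge
`e ∈ E¹` there is a path `p` of positive length with `s(p) = s(e)` and `r(p) = r(e)` such
that `p ≠ e t` for all paths `t`. -/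
theorem stmt14 (G : DGraph) :
    (∀ R : Con (GIS G), IsReesCon R) ↔
      ∀ e : G.Ed, ∃ p : GPath G, p.edges ≠ [] ∧ p.start = G.src e ∧ p.ran = G.rng e ∧
        ∀ (t : GPath G) (ht : (GPath.ofEdge G e).ran = t.start),
          p ≠ (GPath.ofEdge G e).append t ht := by
  constructor
  · exact Stmt14.cond_of_rees
  · intro hC R
    exact Stmt14.rees_of_cond hC R
end

section
/- Every semigroup isomorphism φ : G(E_a) → G(E_b) maps E_a⁰ bijectively onto E_b⁰ and E_a¹ bijectively onto E_b¹, and these restrictions constitute a graph isomorphism from E_a to E_b. Consequently, G(E_a) ≅ G(E_b) as semigroups if and only if E_a ≅ E_b as graphs. -/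
universe u

section Basic

variable {G : DGraph}

theorem GPath.ext'_s19 {p q : GPath G} (h1 : p.start = q.start) (h2 : p.edges = q.edges) :
    p = q := by
  cases p; cases q; simp_all

theorem GIS.mk_inj {x y x' y' : GPath G} {h : x.ran = y.ran} {h' : x'.ran = y'.ran} :
    GIS.mk x y h = GIS.mk x' y' h' ↔ x = x' ∧ y = y' := by
  constructor
  · intro he
    injection he with h1 h2
    exact ⟨h1, h2⟩
  · rintro ⟨rfl, rfl⟩; rfl

theorem GIS.mk_ne_zero_s19 {x y : GPath G} {h : x.ran = y.ran} : GIS.mk x y h ≠ 0 := by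
  intro he; cases he

theorem GIS.zero_def : (0 : GIS G) = GIS.zero := rfl

theorem GIS.zero_mul' (a : GIS G) : (0 : GIS G) * a = 0 := rfl

theorem GIS.mul_zero' (a : GIS G) : a * (0 : GIS G) = 0 := by cases a <;> rfl

theorem GIS.mk_mul_mk_of_prefix {x y p q : GPath G} {hxy : x.ran = y.ran}
    {hpq : p.ran = q.ran} (h1 : y.IsPrefixOf p) :
    GIS.mk x y hxy * GIS.mk p q hpq =
      GIS.mk (x.append (y.remainder p h1) hxy) q
        ((GPath.append_ran _ _ _).trans ((GPath.remainder_ran _ _ _).trans hpq)) := by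
  show GIS.gmul _ _ = _
  simp only [GIS.gmul]
  rw [dif_pos h1]

theorem GIS.mk_mul_mk_of_prefix' {x y p q : GPath G} {hxy : x.ran = y.ran}
    {hpq : p.ran = q.ran} (h1 : ¬ y.IsPrefixOf p) (h2 : p.IsPrefixOf y) :
    GIS.mk x y hxy * GIS.mk p q hpq =
      GIS.mk x (q.append (p.remainder y h2) hpq.symm)
        (hxy.trans ((GPath.append_ran _ _ _).trans (GPath.remainder_ran _ _ _)).symm) := by
  show GIS.gmul _ _ = _
  simp only [GIS.gmul]
  rw [dif_neg h1, dif_pos h2]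

theorem GIS.mk_mul_mk_of_not {x y p q : GPath G} {hxy : x.ran = y.ran}
    {hpq : p.ran = q.ran} (h1 : ¬ y.IsPrefixOf p) (h2 : ¬ p.IsPrefixOf y) :
    GIS.mk x y hxy * GIS.mk p q hpq = 0 := by
  show GIS.gmul _ _ = _
  simp only [GIS.gmul]
  rw [dif_neg h1, dif_neg h2]
  rfl

theorem GPath.isPrefixOf_refl (p : GPath G) : p.IsPrefixOf p := ⟨rfl, List.prefix_refl _⟩

theorem GPath.isPrefixOf_antisymm {p q : GPath G} (h1 : p.IsPrefixOf q) (h2 : q.IsPrefixOf p) :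
    p = q :=
  GPath.ext'_s19 h1.1 (h1.2.eq_of_length_le h2.2.length_le)

/-- The key computation: appending the remainder recovers the path. -/
theorem GPath.append_remainder {y p : GPath G} (h : y.IsPrefixOf p)
    (hh : y.ran = (y.remainder p h).start) :
    y.append (y.remainder p h) hh = p := by
  refine GPath.ext'_s19 h.1 ?_
  show y.edges ++ p.edges.drop y.edges.length = p.edges
  obtain ⟨t, ht⟩ := h.2
  rw [← ht, List.drop_left]

theorem GPath.append_of_edges_nil {p q : GPath G} (h : p.ran = q.start) (hq : q.edges = []) :
    p.append q h = p := by
  refine GPath.ext'_s19 rfl ?_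
  show p.edges ++ q.edges = p.edges
  rw [hq, List.append_nil]

theorem GPath.remainder_self (p : GPath G) (h : p.IsPrefixOf p) :
    (p.remainder p h).edges = [] := by
  show (p.edges.drop p.edges.length) = []
  simp

theorem GPath.ofVertex_isPrefixOf_iff {v : G.V} {p : GPath G} :
    (GPath.ofVertex G v).IsPrefixOf p ↔ v = p.start := by
  constructor
  · exact fun h => h.1
  · exact fun h => ⟨h, List.nil_prefix⟩

theorem GPath.isPrefixOf_ofVertex_iff {v : G.V} {p : GPath G} :
    p.IsPrefixOf (GPath.ofVertex G v) ↔ p = GPath.ofVertex G v := by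
  constructor
  · intro h
    exact GPath.ext'_s19 h.1 (List.prefix_nil.mp h.2)
  · rintro rfl; exact GPath.isPrefixOf_refl _

end Basic
section Proj
variable {G : DGraph}
@[simp] theorem GPath.append_edges (p q : GPath G) (h : p.ran = q.start) :
    (p.append q h).edges = p.edges ++ q.edges := rfl
@[simp] theorem GPath.append_start (p q : GPath G) (h : p.ran = q.start) :
    (p.append q h).start = p.start := rfl
@[simp] theorem GPath.remainder_edges (y p : GPath G) (h : y.IsPrefixOf p) :
    (y.remainder p h).edges = p.edges.drop y.edges.length := rfl
@[simp] theorem GPath.remainder_start (y p : GPath G) (h : y.IsPrefixOf p) :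
    (y.remainder p h).start = y.ran := rfl
@[simp] theorem GPath.ofVertex_start (v : G.V) : (GPath.ofVertex G v).start = v := rfl
@[simp] theorem GPath.ofVertex_edges (v : G.V) : (GPath.ofVertex G v).edges = [] := rfl
@[simp] theorem GPath.ofEdge_start (e : G.Ed) : (GPath.ofEdge G e).start = G.src e := rfl
@[simp] theorem GPath.ofEdge_edges (e : G.Ed) : (GPath.ofEdge G e).edges = [e] := rfl
end Proj
section VertexMul

variable {G : DGraph}

theorem vertexEl_mul_mk_of_start {w : G.V} {x y : GPath G} {h : x.ran = y.ran}
    (hs : x.start = w) : vertexEl G w * GIS.mk x y h = GIS.mk x y h := by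
  have h1 : (GPath.ofVertex G w).IsPrefixOf x := GPath.ofVertex_isPrefixOf_iff.mpr hs.symm
  rw [vertexEl, GIS.mk_mul_mk_of_prefix h1, GIS.mk_inj]
  refine ⟨?_, rfl⟩
  refine GPath.ext'_s19 hs.symm ?_
  show [] ++ x.edges.drop ([] : List G.Ed).length = x.edges
  simp

theorem vertexEl_mul_mk_of_ne {w : G.V} {x y : GPath G} {h : x.ran = y.ran}
    (hs : x.start ≠ w) : vertexEl G w * GIS.mk x y h = 0 := by
  rw [vertexEl]
  refine GIS.mk_mul_mk_of_not ?_ ?_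
  · rw [GPath.ofVertex_isPrefixOf_iff]; exact fun hc => hs hc.symm
  · rw [GPath.isPrefixOf_ofVertex_iff]
    intro hc
    exact hs (congrArg GPath.start hc)

theorem mk_mul_vertexEl_of_start {w : G.V} {x y : GPath G} {h : x.ran = y.ran}
    (hs : y.start = w) : GIS.mk x y h * vertexEl G w = GIS.mk x y h := by
  by_cases hy : y.IsPrefixOf (GPath.ofVertex G w)
  · have hyv : y = GPath.ofVertex G w := GPath.isPrefixOf_ofVertex_iff.mp hy
    rw [vertexEl, GIS.mk_mul_mk_of_prefix hy, GIS.mk_inj]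
    constructor
    · refine GPath.append_of_edges_nil _ ?_
      show ((GPath.ofVertex G w).edges).drop y.edges.length = []
      simp [GPath.ofVertex]
    · exact hyv.symm
  · have h2 : (GPath.ofVertex G w).IsPrefixOf y := GPath.ofVertex_isPrefixOf_iff.mpr hs.symm
    rw [vertexEl, GIS.mk_mul_mk_of_prefix' hy h2, GIS.mk_inj]
    exact ⟨rfl, GPath.append_remainder h2 _⟩

theorem mk_mul_vertexEl_of_ne {w : G.V} {x y : GPath G} {h : x.ran = y.ran}
    (hs : y.start ≠ w) : GIS.mk x y h * vertexEl G w = 0 := by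
  rw [vertexEl]
  refine GIS.mk_mul_mk_of_not ?_ ?_
  · rw [GPath.isPrefixOf_ofVertex_iff]
    intro hc; exact hs (congrArg GPath.start hc)
  · rw [GPath.ofVertex_isPrefixOf_iff]; exact fun hc => hs hc.symm

theorem start_eq_of_mk_mul_vertexEl {w : G.V} {x y : GPath G} {h : x.ran = y.ran}
    (he : GIS.mk x y h * vertexEl G w = GIS.mk x y h) : y.start = w := by
  by_contra hs
  rw [mk_mul_vertexEl_of_ne hs] at he
  exact GIS.mk_ne_zero_s19 he.symm

theorem start_eq_of_vertexEl_mul_mk {w : G.V} {x y : GPath G} {h : x.ran = y.ran}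
    (he : vertexEl G w * GIS.mk x y h = GIS.mk x y h) : x.start = w := by
  by_contra hs
  rw [vertexEl_mul_mk_of_ne hs] at he
  exact GIS.mk_ne_zero_s19 he.symm

end VertexMul

section Idem

variable {G : DGraph}

theorem idem_mul_idem_of_prefix {z p : GPath G} (h : z.IsPrefixOf p) :
    GIS.mk z z rfl * GIS.mk p p rfl = GIS.mk p p rfl := by
  rw [GIS.mk_mul_mk_of_prefix h, GIS.mk_inj]
  exact ⟨GPath.append_remainder h _, rfl⟩

theorem idem_mul_idem_of_prefix' {z p : GPath G} (h1 : ¬ z.IsPrefixOf p)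
    (h2 : p.IsPrefixOf z) : GIS.mk z z rfl * GIS.mk p p rfl = GIS.mk z z rfl := by
  rw [GIS.mk_mul_mk_of_prefix' h1 h2, GIS.mk_inj]
  exact ⟨rfl, GPath.append_remainder h2 _⟩

theorem isIdem_iff {a : GIS G} : (a * a = a ∧ a ≠ 0) ↔ ∃ x : GPath G, a = GIS.mk x x rfl := by
  constructor
  · rintro ⟨hi, hn⟩
    cases a with
    | zero => exact absurd rfl hn
    | mk x y h =>
      refine ⟨x, ?_⟩
      by_cases h1 : y.IsPrefixOf x
      · rw [GIS.mk_mul_mk_of_prefix h1, GIS.mk_inj] at hi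
        have hd : x.edges.drop y.edges.length = [] := by
          have h3 := congrArg GPath.edges hi.1
          have h4 : x.edges ++ x.edges.drop y.edges.length = x.edges ++ [] := by
            rw [List.append_nil]; exact h3
          exact List.append_cancel_left h4
        have hle : x.edges.length ≤ y.edges.length := List.drop_eq_nil_iff.mp hd
        have hyx : y = x := GPath.ext'_s19 h1.1 (h1.2.eq_of_length_le hle)
        cases hyx
        rfl
      · by_cases h2 : x.IsPrefixOf y
        · rw [GIS.mk_mul_mk_of_prefix' h1 h2, GIS.mk_inj] at hi
          have hd : y.edges.drop x.edges.length = [] := by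
            have h3 := congrArg GPath.edges hi.2
            have h4 : y.edges ++ y.edges.drop x.edges.length = y.edges ++ [] := by
              rw [List.append_nil]; exact h3
            exact List.append_cancel_left h4
          have hle : y.edges.length ≤ x.edges.length := List.drop_eq_nil_iff.mp hd
          have hxy : x = y := GPath.ext'_s19 h2.1 (h2.2.eq_of_length_le hle)
          cases hxy
          rfl
        · rw [GIS.mk_mul_mk_of_not h1 h2] at hi
          exact absurd hi.symm GIS.mk_ne_zero_s19
  · rintro ⟨x, rfl⟩
    exact ⟨idem_mul_idem_of_prefix (GPath.isPrefixOf_refl x), GIS.mk_ne_zero_s19⟩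

theorem natLe_idem_iff {x p : GPath G} :
    natLe (GIS.mk x x rfl) (GIS.mk p p rfl) ↔ p.IsPrefixOf x := by
  constructor
  · rintro ⟨ε, hε, heq⟩
    cases ε with
    | zero => exact absurd heq GIS.mk_ne_zero_s19
    | mk z w hzw =>
      obtain ⟨u, hu⟩ := isIdem_iff.mp ⟨hε, GIS.mk_ne_zero_s19⟩
      rw [hu] at heq
      by_cases hc : u.IsPrefixOf p
      · rw [idem_mul_idem_of_prefix hc, GIS.mk_inj] at heq
        rw [heq.1]
        exact GPath.isPrefixOf_refl _
      · by_cases hc2 : p.IsPrefixOf u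
        · rw [idem_mul_idem_of_prefix' hc hc2, GIS.mk_inj] at heq
          rw [heq.1]
          exact hc2
        · rw [GIS.mk_mul_mk_of_not hc hc2] at heq
          exact absurd heq GIS.mk_ne_zero_s19
  · intro hp
    refine ⟨GIS.mk x x rfl, idem_mul_idem_of_prefix (GPath.isPrefixOf_refl x), ?_⟩
    by_cases hc : x.IsPrefixOf p
    · have : x = p := GPath.isPrefixOf_antisymm hc hp
      rw [idem_mul_idem_of_prefix hc, this]
    · rw [idem_mul_idem_of_prefix' hc hp]

end Idem
section Chars

variable {G : DGraph}

/-- `a` is a maximal nonzero idempotent. -/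
def IsVertEl (a : GIS G) : Prop :=
  a * a = a ∧ a ≠ 0 ∧ ∀ b : GIS G, b * b = b → b ≠ 0 → natLe a b → b = a

theorem vertexEl_eq_mk (v : G.V) :
    vertexEl G v = GIS.mk (GPath.ofVertex G v) (GPath.ofVertex G v) rfl := rfl

theorem isVertEl_iff {a : GIS G} : IsVertEl a ↔ ∃ v : G.V, a = vertexEl G v := by
  constructor
  · rintro ⟨hi, hn, hmax⟩
    obtain ⟨x, rfl⟩ := isIdem_iff.mp ⟨hi, hn⟩
    refine ⟨x.start, ?_⟩
    have hpre : (GPath.ofVertex G x.start).IsPrefixOf x := ⟨rfl, List.nil_prefix⟩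
    have := hmax (vertexEl G x.start)
      (idem_mul_idem_of_prefix (GPath.isPrefixOf_refl _)) GIS.mk_ne_zero_s19
      (natLe_idem_iff.mpr hpre)
    exact this.symm
  · rintro ⟨v, rfl⟩
    refine ⟨idem_mul_idem_of_prefix (GPath.isPrefixOf_refl _), GIS.mk_ne_zero_s19, ?_⟩
    intro b hb hbn hle
    obtain ⟨p, rfl⟩ := isIdem_iff.mp ⟨hb, hbn⟩
    have hp := natLe_idem_iff.mp hle
    have : p = GPath.ofVertex G v := GPath.isPrefixOf_ofVertex_iff.mp hp
    rw [this]
    rfl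

/-- `a` is an idempotent lying directly below a vertex: an edge-square `x x⁻¹`. -/
def IsEdgeIdem (a : GIS G) : Prop :=
  a * a = a ∧ a ≠ 0 ∧ ¬ IsVertEl a ∧
    ∀ b : GIS G, b * b = b → b ≠ 0 → natLe a b → b = a ∨ IsVertEl b

theorem isEdgeIdem_iff {a : GIS G} :
    IsEdgeIdem a ↔ ∃ e : G.Ed, a = GIS.mk (GPath.ofEdge G e) (GPath.ofEdge G e) rfl := by
  constructor
  · rintro ⟨hi, hn, hnv, hmax⟩
    obtain ⟨x, rfl⟩ := isIdem_iff.mp ⟨hi, hn⟩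
    have hne : x.edges ≠ [] := by
      intro hnil
      exact hnv (isVertEl_iff.mpr ⟨x.start, by
        rw [vertexEl_eq_mk, GIS.mk_inj]
        have : x = GPath.ofVertex G x.start := GPath.ext'_s19 rfl hnil
        exact ⟨this, this⟩⟩)
    obtain ⟨e, t, het⟩ : ∃ e t, x.edges = e :: t := by
      cases hx : x.edges with
      | nil => exact absurd hx hne
      | cons e t => exact ⟨e, t, rfl⟩
    have hsrc : G.src e = x.start := by
      have hc := x.chain
      rw [het] at hc
      exact hc.1
    refine ⟨e, ?_⟩
    have hchain : G.Chain x.start [e] := ⟨hsrc, trivial⟩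
    set p : GPath G := ⟨x.start, [e], hchain⟩ with hp
    have hpre : p.IsPrefixOf x := ⟨rfl, by rw [het]; exact ⟨t, rfl⟩⟩
    have := hmax (GIS.mk p p rfl) (idem_mul_idem_of_prefix (GPath.isPrefixOf_refl _))
      GIS.mk_ne_zero_s19 (natLe_idem_iff.mpr hpre)
    rcases this with hb | hb
    · rw [GIS.mk_inj] at hb
      have hxp : x = GPath.ofEdge G e := by
        refine GPath.ext'_s19 ?_ ?_
        · rw [← hb.1]; exact hsrc.symm
        · rw [← hb.1]; rfl
      rw [GIS.mk_inj]
      exact ⟨hxp, hxp⟩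
    · obtain ⟨v, hv⟩ := isVertEl_iff.mp hb
      rw [vertexEl_eq_mk, GIS.mk_inj] at hv
      have : p.edges = [] := by rw [hv.1]; rfl
      simp [hp] at this
  · rintro ⟨e, rfl⟩
    refine ⟨idem_mul_idem_of_prefix (GPath.isPrefixOf_refl _), GIS.mk_ne_zero_s19, ?_, ?_⟩
    · intro hv
      obtain ⟨v, hv⟩ := isVertEl_iff.mp hv
      rw [vertexEl_eq_mk, GIS.mk_inj] at hv
      have : (GPath.ofEdge G e).edges = [] := by rw [hv.1]; rfl
      simp at this
    · intro b hb hbn hle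
      obtain ⟨p, rfl⟩ := isIdem_iff.mp ⟨hb, hbn⟩
      have hp := natLe_idem_iff.mp hle
      obtain ⟨t, ht⟩ := hp.2
      cases hpe : p.edges with
      | nil =>
        right
        refine isVertEl_iff.mpr ⟨p.start, ?_⟩
        rw [vertexEl_eq_mk, GIS.mk_inj]
        have : p = GPath.ofVertex G p.start := GPath.ext'_s19 rfl hpe
        exact ⟨this, this⟩
      | cons f l =>
        left
        rw [hpe] at ht
        have hf : f = e ∧ l ++ t = [] := by
          have : f :: (l ++ t) = [e] := by simpa using ht
          exact ⟨(List.cons_eq_cons.mp this).1, (List.cons_eq_cons.mp this).2⟩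
        have hl : l = [] := by
          have := hf.2
          exact List.append_eq_nil_iff.mp this |>.1
        have hpx : p = GPath.ofEdge G e := by
          refine GPath.ext'_s19 ?_ ?_
          · have := hp.1
            simp at this
            exact this
          · rw [hpe, hl, hf.1]
            rfl
        rw [GIS.mk_inj]
        exact ⟨hpx, hpx⟩

theorem vertexEl_injective : Function.Injective (vertexEl G) := by
  intro v w h
  rw [vertexEl_eq_mk, vertexEl_eq_mk, GIS.mk_inj] at h
  exact congrArg GPath.start h.1

theorem edgeEl_injective : Function.Injective (edgeEl G) := by
  intro e f h
  have h := GIS.mk_inj.mp h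
  have := congrArg GPath.edges h.1
  simpa using this

end Chars
section Transfer

variable {Ga Gb : DGraph}

theorem phi_zero (phi : GIS Ga ≃* GIS Gb) : phi 0 = 0 := by
  have h : phi 0 * 0 = phi 0 := by
    have := map_mul phi 0 (phi.symm 0)
    rw [GIS.zero_mul', MulEquiv.apply_symm_apply] at this
    exact this.symm
  rw [GIS.mul_zero'] at h
  exact h.symm

theorem phi_ne_zero (phi : GIS Ga ≃* GIS Gb) {a : GIS Ga} (ha : a ≠ 0) : phi a ≠ 0 := by
  intro h
  exact ha (phi.injective (h.trans (phi_zero phi).symm))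

theorem phi_natLe (phi : GIS Ga ≃* GIS Gb) {a b : GIS Ga} (h : natLe a b) :
    natLe (phi a) (phi b) := by
  obtain ⟨ε, hε, heq⟩ := h
  exact ⟨phi ε, by rw [← map_mul, hε], by rw [← map_mul, heq]⟩

theorem phi_isVertEl (phi : GIS Ga ≃* GIS Gb) {a : GIS Ga} (h : IsVertEl a) :
    IsVertEl (phi a) := by
  obtain ⟨hi, hn, hmax⟩ := h
  refine ⟨by rw [← map_mul, hi], phi_ne_zero phi hn, ?_⟩
  intro b hb hbn hle
  have h1 : phi.symm b * phi.symm b = phi.symm b := by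
    rw [← map_mul, hb]
  have h2 : phi.symm b ≠ 0 := phi_ne_zero phi.symm hbn
  have h3 : natLe a (phi.symm b) := by
    have := phi_natLe phi.symm (a := phi a) (b := b) hle
    rwa [MulEquiv.symm_apply_apply] at this
  have := hmax _ h1 h2 h3
  rw [← this, MulEquiv.apply_symm_apply]

theorem phi_isEdgeIdem (phi : GIS Ga ≃* GIS Gb) {a : GIS Ga} (h : IsEdgeIdem a) :
    IsEdgeIdem (phi a) := by
  obtain ⟨hi, hn, hnv, hmax⟩ := h
  refine ⟨by rw [← map_mul, hi], phi_ne_zero phi hn, ?_, ?_⟩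
  · intro hv
    have := phi_isVertEl phi.symm hv
    rw [MulEquiv.symm_apply_apply] at this
    exact hnv this
  · intro b hb hbn hle
    have h1 : phi.symm b * phi.symm b = phi.symm b := by rw [← map_mul, hb]
    have h2 : phi.symm b ≠ 0 := phi_ne_zero phi.symm hbn
    have h3 : natLe a (phi.symm b) := by
      have := phi_natLe phi.symm (a := phi a) (b := b) hle
      rwa [MulEquiv.symm_apply_apply] at this
    rcases hmax _ h1 h2 h3 with hc | hc
    · left
      rw [← hc, MulEquiv.apply_symm_apply]
    · right
      have := phi_isVertEl phi hc
      rwa [MulEquiv.apply_symm_apply] at this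

/-- The induced vertex map. -/
noncomputable def phiV (phi : GIS Ga ≃* GIS Gb) (v : Ga.V) : Gb.V :=
  (isVertEl_iff.mp (phi_isVertEl phi (isVertEl_iff.mpr ⟨v, rfl⟩))).choose

theorem phiV_spec (phi : GIS Ga ≃* GIS Gb) (v : Ga.V) :
    phi (vertexEl Ga v) = vertexEl Gb (phiV phi v) :=
  (isVertEl_iff.mp (phi_isVertEl phi (isVertEl_iff.mpr ⟨v, rfl⟩))).choose_spec

end Transfer
section EdgeAnalysis

variable {G : DGraph}

theorem GPath.ran_of_nil {q : GPath G} (h : q.edges = []) : q.ran = q.start := by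
  show G.ranAux q.start q.edges = q.start
  rw [h]
  rfl

variable {Ga Gb : DGraph}

theorem phi_edge (phi : GIS Ga ≃* GIS Gb) (e : Ga.Ed) :
    ∃ f : Gb.Ed, phi (edgeEl Ga e) = edgeEl Gb f ∧
      phiV phi (Ga.src e) = Gb.src f ∧ phiV phi (Ga.rng e) = Gb.rng f := by
  set x : GPath Ga := GPath.ofEdge Ga e with hx
  set yv : GPath Ga := GPath.ofVertex Ga (Ga.rng e) with hyv
  have hxy : x.ran = yv.ran := rfl
  have ha : edgeEl Ga e = GIS.mk x yv rfl := rfl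
  set b : GIS Ga := GIS.mk yv x rfl with hb
  -- F1 : a * b = mk x x
  have hF1 : GIS.mk x yv rfl * b = GIS.mk x x rfl := by
    rw [hb]; refine (GIS.mk_mul_mk_of_prefix (GPath.isPrefixOf_refl yv)).trans (GIS.mk_inj.mpr ?_)
    refine ⟨GPath.append_of_edges_nil _ ?_, rfl⟩
    simp
  -- F2 : b * a = vertexEl (rng e)
  have hF2 : b * GIS.mk x yv rfl = vertexEl Ga (Ga.rng e) := by
    rw [hb]; refine (GIS.mk_mul_mk_of_prefix (GPath.isPrefixOf_refl x)).trans (GIS.mk_inj.mpr ?_)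
    refine ⟨GPath.append_of_edges_nil _ ?_, rfl⟩
    simp
  -- image of the edge idempotent
  have hEI : IsEdgeIdem (phi (GIS.mk x x rfl)) :=
    phi_isEdgeIdem phi (isEdgeIdem_iff.mpr ⟨e, rfl⟩)
  obtain ⟨f, hf⟩ := isEdgeIdem_iff.mp hEI
  set z : GPath Gb := GPath.ofEdge Gb f with hz
  refine ⟨f, ?_⟩
  -- destructure A := phi a
  have hAne : phi (GIS.mk x yv rfl) ≠ 0 := phi_ne_zero phi GIS.mk_ne_zero_s19
  obtain ⟨p, q, hpq, hA⟩ : ∃ p q hpq, phi (GIS.mk x yv rfl) = GIS.mk p q hpq := by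
    cases hA : phi (GIS.mk x yv rfl) with
    | zero => exact absurd hA hAne
    | mk p q hpq => exact ⟨p, q, hpq, rfl⟩
  obtain ⟨p', q', hpq', hB⟩ : ∃ p' q' hpq', phi b = GIS.mk p' q' hpq' := by
    cases hB : phi b with
    | zero => exact absurd hB (phi_ne_zero phi GIS.mk_ne_zero_s19)
    | mk p' q' hpq' => exact ⟨p', q', hpq', rfl⟩
  set w : Gb.V := phiV phi (Ga.rng e) with hw
  set w' : Gb.V := phiV phi (Ga.src e) with hw'
  -- transported equations
  have hE1 : GIS.mk p q hpq * GIS.mk p' q' hpq' = GIS.mk z z rfl := by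
    rw [← hA, ← hB, ← map_mul, hF1, hf]
  have hE2 : GIS.mk p' q' hpq' * GIS.mk p q hpq = vertexEl Gb w := by
    rw [← hA, ← hB, ← map_mul, hF2, hw, phiV_spec]
  have hE4 : GIS.mk p q hpq * vertexEl Gb w = GIS.mk p q hpq := by
    rw [hw, ← phiV_spec, ← hA, ← map_mul]
    have : GIS.mk x yv rfl * vertexEl Ga (Ga.rng e) = GIS.mk x yv rfl :=
      mk_mul_vertexEl_of_start rfl
    rw [this]
  have hE5 : vertexEl Gb w' * GIS.mk p q hpq = GIS.mk p q hpq := by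
    rw [hw', ← phiV_spec, ← hA, ← map_mul]
    have : vertexEl Ga (Ga.src e) * GIS.mk x yv rfl = GIS.mk x yv rfl :=
      vertexEl_mul_mk_of_start rfl
    rw [this]
  have hqw : q.start = w := start_eq_of_mk_mul_vertexEl hE4
  have hpw' : p.start = w' := start_eq_of_vertexEl_mul_mk hE5
  -- analyze E2
  have hkey2 : q.edges = [] ∧ p'.edges = [] ∧ q'.edges = p.edges := by
    rw [vertexEl_eq_mk] at hE2
    by_cases hb1 : q'.IsPrefixOf p
    · rw [GIS.mk_mul_mk_of_prefix hb1, GIS.mk_inj] at hE2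
      have c1 := congrArg GPath.edges hE2.1
      simp only [GPath.append_edges, GPath.remainder_edges, GPath.ofVertex_edges] at c1
      obtain ⟨c1a, c1b⟩ := List.append_eq_nil_iff.mp c1
      have hle : p.edges.length ≤ q'.edges.length := List.drop_eq_nil_iff.mp c1b
      refine ⟨by rw [hE2.2]; rfl, c1a, hb1.2.eq_of_length_le hle⟩
    · by_cases hb2 : p.IsPrefixOf q'
      · rw [GIS.mk_mul_mk_of_prefix' hb1 hb2, GIS.mk_inj] at hE2
        have c1 := congrArg GPath.edges hE2.1
        have c2 := congrArg GPath.edges hE2.2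
        simp only [GPath.append_edges, GPath.remainder_edges, GPath.ofVertex_edges] at c1 c2
        obtain ⟨c2a, c2b⟩ := List.append_eq_nil_iff.mp c2
        have hle : q'.edges.length ≤ p.edges.length := List.drop_eq_nil_iff.mp c2b
        exact ⟨c2a, c1, (hb2.2.eq_of_length_le hle).symm⟩
      · rw [GIS.mk_mul_mk_of_not hb1 hb2] at hE2
        exact absurd hE2.symm GIS.mk_ne_zero_s19
  obtain ⟨hqnil, hp'nil, hq'p⟩ := hkey2
  -- analyze E1
  have hkey1 : p.edges = z.edges ∧ p.start = z.start := by
    by_cases hc1 : q.IsPrefixOf p'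
    · rw [GIS.mk_mul_mk_of_prefix hc1, GIS.mk_inj] at hE1
      have d1e := congrArg GPath.edges hE1.1
      have d1s := congrArg GPath.start hE1.1
      change p.edges ++ p'.edges.drop q.edges.length = z.edges at d1e
      change p.start = z.start at d1s
      rw [hp'nil] at d1e
      simp at d1e
      exact ⟨d1e, d1s⟩
    · by_cases hc2 : p'.IsPrefixOf q
      · rw [GIS.mk_mul_mk_of_prefix' hc1 hc2, GIS.mk_inj] at hE1
        exact ⟨congrArg GPath.edges hE1.1, congrArg GPath.start hE1.1⟩
      · rw [GIS.mk_mul_mk_of_not hc1 hc2] at hE1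
        exact absurd hE1 (Ne.symm GIS.mk_ne_zero_s19)
  have hpz : p = z := GPath.ext'_s19 hkey1.2 hkey1.1
  -- ranges
  have hwrng : w = Gb.rng f := by
    rw [← hqw, ← GPath.ran_of_nil hqnil, ← hpq, hpz, hz]
    simp
  refine ⟨?_, ?_, ?_⟩
  · rw [ha, hA]; refine GIS.mk_inj.mpr ?_
    constructor
    · rw [hpz, hz]
    · refine GPath.ext'_s19 ?_ hqnil
      rw [hqw, hwrng]
      rfl
  · rw [← hpw', hpz, hz]
    rfl
  · exact hwrng

end EdgeAnalysis
section Forward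

variable {Ga Gb : DGraph}

/-- The induced edge map. -/
noncomputable def phiE (phi : GIS Ga ≃* GIS Gb) (e : Ga.Ed) : Gb.Ed :=
  (phi_edge phi e).choose

theorem phiE_spec (phi : GIS Ga ≃* GIS Gb) (e : Ga.Ed) :
    phi (edgeEl Ga e) = edgeEl Gb (phiE phi e) ∧
      phiV phi (Ga.src e) = Gb.src (phiE phi e) ∧
      phiV phi (Ga.rng e) = Gb.rng (phiE phi e) :=
  (phi_edge phi e).choose_spec

theorem phiV_bijective (phi : GIS Ga ≃* GIS Gb) : Function.Bijective (phiV phi) := by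
  constructor
  · intro v w h
    apply vertexEl_injective (G := Ga)
    apply phi.injective
    rw [phiV_spec, phiV_spec, h]
  · intro w
    refine ⟨phiV phi.symm w, ?_⟩
    apply vertexEl_injective (G := Gb)
    rw [← phiV_spec]
    have := phiV_spec phi.symm w
    apply_fun phi at this
    rw [MulEquiv.apply_symm_apply] at this
    rw [← this]

theorem phiE_bijective (phi : GIS Ga ≃* GIS Gb) : Function.Bijective (phiE phi) := by
  constructor
  · intro e f h
    apply edgeEl_injective (G := Ga)
    apply phi.injective
    rw [(phiE_spec phi e).1, (phiE_spec phi f).1, h]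
  · intro f
    refine ⟨phiE phi.symm f, ?_⟩
    apply edgeEl_injective (G := Gb)
    rw [← (phiE_spec phi _).1]
    have := (phiE_spec phi.symm f).1
    apply_fun phi at this
    rw [MulEquiv.apply_symm_apply] at this
    rw [← this]

theorem forward_dir (phi : GIS Ga ≃* GIS Gb) :
    ∃ (phi0 : Ga.V → Gb.V) (phi1 : Ga.Ed → Gb.Ed),
      Function.Bijective phi0 ∧ Function.Bijective phi1 ∧
      (∀ e : Ga.Ed, phi0 (Ga.src e) = Gb.src (phi1 e)) ∧
      (∀ e : Ga.Ed, phi0 (Ga.rng e) = Gb.rng (phi1 e)) ∧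
      (∀ v : Ga.V, phi (vertexEl Ga v) = vertexEl Gb (phi0 v)) ∧
      (∀ e : Ga.Ed, phi (edgeEl Ga e) = edgeEl Gb (phi1 e)) :=
  ⟨phiV phi, phiE phi, phiV_bijective phi, phiE_bijective phi,
    fun e => (phiE_spec phi e).2.1, fun e => (phiE_spec phi e).2.2,
    fun v => phiV_spec phi v, fun e => (phiE_spec phi e).1⟩

end Forward
section Converse

variable {Ga Gb : DGraph}

theorem chain_map (f0 : Ga.V → Gb.V) (f1 : Ga.Ed → Gb.Ed)
    (hs : ∀ e, f0 (Ga.src e) = Gb.src (f1 e)) (hr : ∀ e, f0 (Ga.rng e) = Gb.rng (f1 e))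
    {v : Ga.V} {l : List Ga.Ed} (h : Ga.Chain v l) :
    Gb.Chain (f0 v) (l.map f1) := by
  induction l generalizing v with
  | nil => trivial
  | cons e es ih =>
    refine ⟨by rw [← hs e]; exact congrArg f0 h.1, ?_⟩
    rw [← hr e]
    exact ih h.2

theorem ranAux_map (f0 : Ga.V → Gb.V) (f1 : Ga.Ed → Gb.Ed)
    (hr : ∀ e, f0 (Ga.rng e) = Gb.rng (f1 e)) {l : List Ga.Ed} {v : Ga.V} :
    Gb.ranAux (f0 v) (l.map f1) = f0 (Ga.ranAux v l) := by
  induction l generalizing v with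
  | nil => rfl
  | cons e es ih =>
    show Gb.ranAux (Gb.rng (f1 e)) (es.map f1) = f0 (Ga.ranAux (Ga.rng e) es)
    rw [← hr e]
    exact ih

/-- Push a path forward along a graph homomorphism. -/
def mapPath (f0 : Ga.V → Gb.V) (f1 : Ga.Ed → Gb.Ed)
    (hs : ∀ e, f0 (Ga.src e) = Gb.src (f1 e)) (hr : ∀ e, f0 (Ga.rng e) = Gb.rng (f1 e))
    (p : GPath Ga) : GPath Gb :=
  ⟨f0 p.start, p.edges.map f1, chain_map f0 f1 hs hr p.chain⟩

@[simp] theorem mapPath_start (f0 : Ga.V → Gb.V) (f1 : Ga.Ed → Gb.Ed)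
    (hs : ∀ e, f0 (Ga.src e) = Gb.src (f1 e)) (hr : ∀ e, f0 (Ga.rng e) = Gb.rng (f1 e))
    (p : GPath Ga) : (mapPath f0 f1 hs hr p).start = f0 p.start := rfl

@[simp] theorem mapPath_edges (f0 : Ga.V → Gb.V) (f1 : Ga.Ed → Gb.Ed)
    (hs : ∀ e, f0 (Ga.src e) = Gb.src (f1 e)) (hr : ∀ e, f0 (Ga.rng e) = Gb.rng (f1 e))
    (p : GPath Ga) : (mapPath f0 f1 hs hr p).edges = p.edges.map f1 := rfl

theorem mapPath_ran (f0 : Ga.V → Gb.V) (f1 : Ga.Ed → Gb.Ed)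
    (hs : ∀ e, f0 (Ga.src e) = Gb.src (f1 e)) (hr : ∀ e, f0 (Ga.rng e) = Gb.rng (f1 e))
    (p : GPath Ga) : (mapPath f0 f1 hs hr p).ran = f0 p.ran :=
  ranAux_map f0 f1 hr

theorem mapPath_prefix (f0 : Ga.V → Gb.V) (f1 : Ga.Ed → Gb.Ed)
    (hs : ∀ e, f0 (Ga.src e) = Gb.src (f1 e)) (hr : ∀ e, f0 (Ga.rng e) = Gb.rng (f1 e))
    {y p : GPath Ga} (h : y.IsPrefixOf p) :
    (mapPath f0 f1 hs hr y).IsPrefixOf (mapPath f0 f1 hs hr p) :=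
  ⟨congrArg f0 h.1, h.2.map f1⟩

theorem mapPath_prefix_rev (f0 : Ga.V → Gb.V) (f1 : Ga.Ed → Gb.Ed)
    (hs : ∀ e, f0 (Ga.src e) = Gb.src (f1 e)) (hr : ∀ e, f0 (Ga.rng e) = Gb.rng (f1 e))
    (h0 : Function.Injective f0) (h1 : Function.Injective f1)
    {y p : GPath Ga} (h : (mapPath f0 f1 hs hr y).IsPrefixOf (mapPath f0 f1 hs hr p)) :
    y.IsPrefixOf p := by
  refine ⟨h0 h.1, ?_⟩
  have h2 := h.2
  simp only [mapPath_edges] at h2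
  rw [List.prefix_iff_eq_take] at h2 ⊢
  rw [List.length_map, ← List.map_take] at h2
  exact List.map_injective_iff.mpr h1 h2

/-- Push the semigroup elements forward along a graph homomorphism. -/
def gisMap (f0 : Ga.V → Gb.V) (f1 : Ga.Ed → Gb.Ed)
    (hs : ∀ e, f0 (Ga.src e) = Gb.src (f1 e)) (hr : ∀ e, f0 (Ga.rng e) = Gb.rng (f1 e)) :
    GIS Ga → GIS Gb
  | GIS.zero => 0
  | GIS.mk x y h => GIS.mk (mapPath f0 f1 hs hr x) (mapPath f0 f1 hs hr y)
      (by rw [mapPath_ran, mapPath_ran, h])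

@[simp] theorem gisMap_zero (f0 : Ga.V → Gb.V) (f1 : Ga.Ed → Gb.Ed)
    (hs : ∀ e, f0 (Ga.src e) = Gb.src (f1 e)) (hr : ∀ e, f0 (Ga.rng e) = Gb.rng (f1 e)) :
    gisMap f0 f1 hs hr 0 = 0 := rfl

theorem gisMap_mk (f0 : Ga.V → Gb.V) (f1 : Ga.Ed → Gb.Ed)
    (hs : ∀ e, f0 (Ga.src e) = Gb.src (f1 e)) (hr : ∀ e, f0 (Ga.rng e) = Gb.rng (f1 e))
    (x y : GPath Ga) (h : x.ran = y.ran) :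
    gisMap f0 f1 hs hr (GIS.mk x y h) =
      GIS.mk (mapPath f0 f1 hs hr x) (mapPath f0 f1 hs hr y)
        (by rw [mapPath_ran, mapPath_ran, h]) := rfl

theorem gisMap_mul (f0 : Ga.V → Gb.V) (f1 : Ga.Ed → Gb.Ed)
    (hs : ∀ e, f0 (Ga.src e) = Gb.src (f1 e)) (hr : ∀ e, f0 (Ga.rng e) = Gb.rng (f1 e))
    (h0 : Function.Injective f0) (h1 : Function.Injective f1)
    (a b : GIS Ga) :
    gisMap f0 f1 hs hr (a * b) = gisMap f0 f1 hs hr a * gisMap f0 f1 hs hr b := by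
  cases a with
  | zero => rfl
  | mk x y hxy =>
    cases b with
    | zero =>
      show gisMap f0 f1 hs hr (GIS.mk x y hxy * 0) =
        gisMap f0 f1 hs hr (GIS.mk x y hxy) * gisMap f0 f1 hs hr 0
      rw [GIS.mul_zero', gisMap_zero, GIS.mul_zero']
    | mk p q hpq =>
      by_cases hc1 : y.IsPrefixOf p
      · rw [GIS.mk_mul_mk_of_prefix hc1, gisMap_mk, gisMap_mk, gisMap_mk,
          GIS.mk_mul_mk_of_prefix (mapPath_prefix f0 f1 hs hr hc1), GIS.mk_inj]
        refine ⟨GPath.ext'_s19 rfl ?_, rfl⟩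
        show List.map f1 (x.edges ++ p.edges.drop y.edges.length) =
          x.edges.map f1 ++ (p.edges.map f1).drop (y.edges.map f1).length
        simp [List.map_drop]
      · by_cases hc2 : p.IsPrefixOf y
        · rw [GIS.mk_mul_mk_of_prefix' hc1 hc2, gisMap_mk, gisMap_mk, gisMap_mk,
            GIS.mk_mul_mk_of_prefix'
              (fun hc => hc1 (mapPath_prefix_rev f0 f1 hs hr h0 h1 hc))
              (mapPath_prefix f0 f1 hs hr hc2), GIS.mk_inj]
          refine ⟨rfl, GPath.ext'_s19 rfl ?_⟩
          show List.map f1 (q.edges ++ y.edges.drop p.edges.length) =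
            q.edges.map f1 ++ (y.edges.map f1).drop (p.edges.map f1).length
          simp [List.map_drop]
        · rw [GIS.mk_mul_mk_of_not hc1 hc2, gisMap_mk, gisMap_mk,
            GIS.mk_mul_mk_of_not
              (fun hc => hc1 (mapPath_prefix_rev f0 f1 hs hr h0 h1 hc))
              (fun hc => hc2 (mapPath_prefix_rev f0 f1 hs hr h0 h1 hc))]
          rfl

theorem backward_dir (phi0 : Ga.V → Gb.V) (phi1 : Ga.Ed → Gb.Ed)
    (bij0 : Function.Bijective phi0) (bij1 : Function.Bijective phi1)
    (hsc : ∀ e, phi0 (Ga.src e) = Gb.src (phi1 e))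
    (hrc : ∀ e, phi0 (Ga.rng e) = Gb.rng (phi1 e)) :
    Nonempty (GIS Ga ≃* GIS Gb) := by
  let e0 := Equiv.ofBijective phi0 bij0
  let e1 := Equiv.ofBijective phi1 bij1
  have hphi0 : ∀ v, phi0 v = e0 v := fun _ => rfl
  have hphi1 : ∀ e, phi1 e = e1 e := fun _ => rfl
  have hsc' : ∀ f, e0.symm (Gb.src f) = Ga.src (e1.symm f) := by
    intro f
    apply bij0.1
    rw [hphi0, e0.apply_symm_apply, hsc, hphi1, e1.apply_symm_apply]
  have hrc' : ∀ f, e0.symm (Gb.rng f) = Ga.rng (e1.symm f) := by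
    intro f
    apply bij0.1
    rw [hphi0, e0.apply_symm_apply, hrc, hphi1, e1.apply_symm_apply]
  refine ⟨MulEquiv.mk ⟨gisMap phi0 phi1 hsc hrc,
    gisMap (fun w => e0.symm w) (fun f => e1.symm f) hsc' hrc', ?_, ?_⟩ ?_⟩
  · intro a
    cases a with
    | zero => rfl
    | mk x y h =>
      show GIS.mk _ _ _ = _
      rw [GIS.mk_inj]
      have hpath : ∀ p : GPath Ga,
          mapPath (fun w => e0.symm w) (fun f => e1.symm f) hsc' hrc'
            (mapPath phi0 phi1 hsc hrc p) = p := by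
        intro p
        refine GPath.ext'_s19 ?_ ?_
        · show e0.symm (phi0 p.start) = p.start
          rw [hphi0, e0.symm_apply_apply]
        · show (p.edges.map phi1).map (fun f => e1.symm f) = p.edges
          rw [List.map_map]
          have hcomp : ((fun f => e1.symm f) ∘ phi1) = id :=
            funext fun a => e1.symm_apply_apply a
          rw [hcomp, List.map_id]
      exact ⟨hpath x, hpath y⟩
  · intro a
    cases a with
    | zero => rfl
    | mk x y h =>
      show GIS.mk _ _ _ = _
      rw [GIS.mk_inj]
      have hpath : ∀ p : GPath Gb,
          mapPath phi0 phi1 hsc hrc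
            (mapPath (fun w => e0.symm w) (fun f => e1.symm f) hsc' hrc' p) = p := by
        intro p
        refine GPath.ext'_s19 ?_ ?_
        · show phi0 (e0.symm p.start) = p.start
          rw [hphi0, e0.apply_symm_apply]
        · show (p.edges.map (fun f => e1.symm f)).map phi1 = p.edges
          rw [List.map_map]
          have hcomp : (phi1 ∘ fun f => e1.symm f) = id :=
            funext fun a => by
              show phi1 (e1.symm a) = a
              rw [hphi1, e1.apply_symm_apply]
          rw [hcomp, List.map_id]
      exact ⟨hpath x, hpath y⟩
  · exact gisMap_mul phi0 phi1 hsc hrc bij0.1 bij1.1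

end Converse

/-- Every semigroup isomorphism `G(E_a) → G(E_b)` restricts to a graph
isomorphism `E_a → E_b`; consequently `G(E_a) ≅ G(E_b)` as semigroups iff `E_a ≅ E_b` as
graphs. -/
theorem stmt19 (Ga Gb : DGraph) :
    (∀ phi : GIS Ga ≃* GIS Gb,
      ∃ (phi0 : Ga.V → Gb.V) (phi1 : Ga.Ed → Gb.Ed),
        Function.Bijective phi0 ∧ Function.Bijective phi1 ∧
        (∀ e : Ga.Ed, phi0 (Ga.src e) = Gb.src (phi1 e)) ∧
        (∀ e : Ga.Ed, phi0 (Ga.rng e) = Gb.rng (phi1 e)) ∧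
        (∀ v : Ga.V, phi (vertexEl Ga v) = vertexEl Gb (phi0 v)) ∧
        (∀ e : Ga.Ed, phi (edgeEl Ga e) = edgeEl Gb (phi1 e))) ∧
    (Nonempty (GIS Ga ≃* GIS Gb) ↔
      ∃ (phi0 : Ga.V → Gb.V) (phi1 : Ga.Ed → Gb.Ed),
        Function.Bijective phi0 ∧ Function.Bijective phi1 ∧
        (∀ e : Ga.Ed, phi0 (Ga.src e) = Gb.src (phi1 e)) ∧
        (∀ e : Ga.Ed, phi0 (Ga.rng e) = Gb.rng (phi1 e))) := by
  constructor
  · exact fun phi => forward_dir phi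
  · constructor
    · rintro ⟨phi⟩
      obtain ⟨p0, p1, b0, b1, hsc, hrc, _, _⟩ := forward_dir phi
      exact ⟨p0, p1, b0, b1, hsc, hrc⟩
    · rintro ⟨phi0, phi1, bij0, bij1, hsc, hrc⟩
      exact backward_dir phi0 phi1 bij0 bij1 hsc hrc
end
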